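/- arXiv:2206.14418 — 9 statements merged into one kernel-verified Lean document; each statement's English description precedes it below -/
import Mathlib

section
/- Let σ : ℝ → ℝ be monotone and L-Lipschitz for some L > 0, i.e. 0 ≤ (σ(a) − σ(c))/(a − c) ≤ L for all reals a ≠ c, and let σ̃(a) = ∫₀ᵃ σ(t) dt. Define Φ : ℝⁿ → ℝ by Φ(z) = (1/2)‖z‖² + Σ_{i=1}^m σ̃((A(z + b))_i). Then Φ is convex, and for every z ∈ ℝⁿ, z is a global minimizer of Φ (i.e. Φ(z) ≤ Φ(u) for all u ∈ ℝⁿ) if and only if z = f(z). -/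
open Matrix


private lemma aux_mono {σ : ℝ → ℝ} {L : ℝ}
    (hσ : ∀ a c : ℝ, a ≠ c → 0 ≤ (σ a - σ c) / (a - c) ∧ (σ a - σ c) / (a - c) ≤ L) :
    Monotone σ := by
  intro x y hxy
  rcases eq_or_lt_of_le hxy with rfl | h
  · exact le_rfl
  · have h1 := (hσ y x (by intro he; simp [he] at h)).1
    have hy : (0:ℝ) < y - x := by linarith
    nlinarith [mul_nonneg h1 hy.le, div_mul_cancel₀ (σ y - σ x) (ne_of_gt hy)]

private lemma aux_lip {σ : ℝ → ℝ} {L : ℝ}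
    (hσ : ∀ a c : ℝ, a ≠ c → 0 ≤ (σ a - σ c) / (a - c) ∧ (σ a - σ c) / (a - c) ≤ L) :
    ∀ x y : ℝ, y ≤ x → σ x - σ y ≤ L * (x - y) := by
  intro x y hxy
  rcases eq_or_lt_of_le hxy with rfl | h
  · simp
  · have h2 := (hσ x y (by intro he; simp [he] at h)).2
    have hp : (0:ℝ) < x - y := by linarith
    nlinarith [div_mul_cancel₀ (σ x - σ y) (ne_of_gt hp)]

private lemma aux_cont {σ : ℝ → ℝ} {L : ℝ} (hL : 0 < L)
    (hσ : ∀ a c : ℝ, a ≠ c → 0 ≤ (σ a - σ c) / (a - c) ∧ (σ a - σ c) / (a - c) ≤ L) :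
    Continuous σ := by
  have hlw : LipschitzWith ⟨L, hL.le⟩ σ := by
    apply LipschitzWith.of_dist_le_mul
    intro x y
    rw [Real.dist_eq, Real.dist_eq]; change |σ x - σ y| ≤ L * |x - y|
    rcases le_total y x with h | h
    · have h1 := aux_lip hσ x y h
      have h2 : 0 ≤ σ x - σ y := by have := aux_mono hσ h; linarith
      rw [abs_of_nonneg h2, abs_of_nonneg (by linarith : (0:ℝ) ≤ x - y)]
      linarith
    · have h1 := aux_lip hσ y x h
      have h2 : 0 ≤ σ y - σ x := by have := aux_mono hσ h; linarith
      rw [abs_of_nonpos (by linarith : σ x - σ y ≤ 0), abs_of_nonpos (by linarith : x - y ≤ 0)]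
      linarith
  exact hlw.continuous

private lemma aux_int_lb {σ : ℝ → ℝ} (hc : Continuous σ) (hm : Monotone σ) (a c : ℝ) :
    σ a * (c - a) ≤ ∫ t in a..c, σ t := by
  rcases le_total a c with h | h
  · have h1 : (∫ _t in a..c, σ a) ≤ ∫ t in a..c, σ t :=
      intervalIntegral.integral_mono_on h intervalIntegrable_const
        (hc.intervalIntegrable _ _) (fun t ht => hm ht.1)
    simpa [mul_comm] using h1
  · have h1 : (∫ t in c..a, σ t) ≤ ∫ _t in c..a, σ a :=
      intervalIntegral.integral_mono_on h (hc.intervalIntegrable _ _)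
        intervalIntegrable_const (fun t ht => hm ht.2)
    have h2 : (∫ t in a..c, σ t) = -∫ t in c..a, σ t := intervalIntegral.integral_symm c a
    rw [h2]
    simp only [intervalIntegral.integral_const, smul_eq_mul] at h1
    nlinarith

private lemma aux_affine_int (a p q C L : ℝ) :
    ∫ t in p..q, (C + L * (t - a)) = C * (q - p) + L / 2 * ((q - a) ^ 2 - (p - a) ^ 2) := by
  have h1 : IntervalIntegrable (fun t : ℝ => L * (t - a)) MeasureTheory.volume p q :=
    ((continuous_const.mul (continuous_id.sub continuous_const)).intervalIntegrable _ _)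
  rw [intervalIntegral.integral_add intervalIntegrable_const h1,
    intervalIntegral.integral_const, smul_eq_mul]
  have h2 : (∫ t in p..q, L * (t - a)) = L * ∫ t in p..q, (t - a) :=
    intervalIntegral.integral_const_mul _ _
  have h3 : (∫ t in p..q, (t - a)) = (q ^ 2 - p ^ 2) / 2 - (q - p) * a := by
    rw [intervalIntegral.integral_sub (intervalIntegral.intervalIntegrable_id)
      intervalIntegrable_const, integral_id, intervalIntegral.integral_const, smul_eq_mul]
  rw [h2, h3]; ring

private lemma aux_int_ub {σ : ℝ → ℝ} {L : ℝ} (hc : Continuous σ)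
    (hlip : ∀ x y : ℝ, y ≤ x → σ x - σ y ≤ L * (x - y)) (a c : ℝ) :
    (∫ t in a..c, σ t) ≤ σ a * (c - a) + L / 2 * (c - a) ^ 2 := by
  rcases le_total a c with h | h
  · have h1 : (∫ t in a..c, σ t) ≤ ∫ t in a..c, (σ a + L * (t - a)) :=
      intervalIntegral.integral_mono_on h (hc.intervalIntegrable _ _)
        ((continuous_const.add (continuous_const.mul
          (continuous_id.sub continuous_const))).intervalIntegrable _ _)
        (fun t ht => by have := hlip t a ht.1; linarith)
    rw [aux_affine_int] at h1
    nlinarith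
  · have h1 : (∫ t in c..a, (σ a + L * (t - a))) ≤ ∫ t in c..a, σ t :=
      intervalIntegral.integral_mono_on h
        ((continuous_const.add (continuous_const.mul
          (continuous_id.sub continuous_const))).intervalIntegrable _ _)
        (hc.intervalIntegrable _ _)
        (fun t ht => by have := hlip a t ht.2; linarith)
    rw [aux_affine_int] at h1
    have h2 : (∫ t in a..c, σ t) = -∫ t in c..a, σ t := intervalIntegral.integral_symm c a
    rw [h2]
    nlinarith

/-- For `σ` monotone and `L`-Lipschitz (in the difference-quotient sense),
`σ̃ a = ∫ t in 0..a, σ t`, and `Φ z = (1/2)‖z‖² + ∑ i, σ̃ ((A (z + b)) i)`, the function `Φ`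
is convex, and `z` is a global minimizer of `Φ` iff `z = f z`, where
`f z = −Aᵀ σ (A (z + b))` componentwise. -/
theorem stmt0 {m n : ℕ} (A : Matrix (Fin m) (Fin n) ℝ) (b : EuclideanSpace ℝ (Fin n))
    (σ : ℝ → ℝ) (L : ℝ) (hL : 0 < L)
    (hσ : ∀ a c : ℝ, a ≠ c →
      0 ≤ (σ a - σ c) / (a - c) ∧ (σ a - σ c) / (a - c) ≤ L)
    (f : EuclideanSpace ℝ (Fin n) → EuclideanSpace ℝ (Fin n))
    (hf : ∀ z, f z = -(Aᵀ.mulVec (fun i => σ (A.mulVec (z + b) i))))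
    (Φ : EuclideanSpace ℝ (Fin n) → ℝ)
    (hΦ : ∀ z, Φ z = (1/2) * ‖z‖^2 + ∑ i, ∫ t in (0:ℝ)..(A.mulVec (z + b) i), σ t) :
    ConvexOn ℝ Set.univ Φ ∧ ∀ z, (∀ u, Φ z ≤ Φ u) ↔ z = f z := by
  have hcont : Continuous σ := aux_cont hL hσ
  have hmono : Monotone σ := aux_mono hσ
  have hlip : ∀ x y : ℝ, y ≤ x → σ x - σ y ≤ L * (x - y) := aux_lip hσ
  have hns : ∀ v : EuclideanSpace ℝ (Fin n), ‖v‖ ^ 2 = ∑ j, v j ^ 2 := by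
    intro v
    rw [EuclideanSpace.norm_eq, Real.sq_sqrt (Finset.sum_nonneg fun j _ => sq_nonneg _)]
    simp [sq_abs]
  -- difference of the linear images
  have hdiff : ∀ z u : EuclideanSpace ℝ (Fin n), ∀ i,
      A.mulVec (u + b) i - A.mulVec (z + b) i = ∑ j, A i j * ((u - z) j) := by
    intro z u i
    simp only [Matrix.mulVec, dotProduct, PiLp.add_apply, PiLp.sub_apply, Pi.add_apply]
    rw [← Finset.sum_sub_distrib]
    exact Finset.sum_congr rfl fun j _ => by ring
  have decomp : ∀ z u : EuclideanSpace ℝ (Fin n),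
      Φ u = Φ z + (∑ j, (z - f z) j * (u - z) j)
        + (1/2) * ∑ j, ((u - z) j) ^ 2
        + ∑ i, ((∫ t in (A.mulVec (z + b) i)..(A.mulVec (u + b) i), σ t)
            - σ (A.mulVec (z + b) i) * (A.mulVec (u + b) i - A.mulVec (z + b) i)) := by
    intro z u
    have hsplit : ∀ i : Fin m, (∫ t in (0:ℝ)..(A.mulVec (u + b) i), σ t)
        = (∫ t in (0:ℝ)..(A.mulVec (z + b) i), σ t)
          + ∫ t in (A.mulVec (z + b) i)..(A.mulVec (u + b) i), σ t := fun i =>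
      (intervalIntegral.integral_add_adjacent_intervals
        (hcont.intervalIntegrable _ _) (hcont.intervalIntegrable _ _)).symm
    have hgrad : (∑ j, (z - f z) j * (u - z) j)
        = (∑ j, z j * ((u - z) j))
          + ∑ i, σ (A.mulVec (z + b) i) * (A.mulVec (u + b) i - A.mulVec (z + b) i) := by
      have hfz : ∀ j, (z - f z) j = z j + ∑ i, A i j * σ (A.mulVec (z + b) i) := by
        intro j
        rw [PiLp.sub_apply, hf z]
        simp [Matrix.mulVec, dotProduct, Matrix.transpose_apply]
      calc (∑ j, (z - f z) j * (u - z) j)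
          = ∑ j, (z j * ((u - z) j) + ∑ i, (A i j * σ (A.mulVec (z + b) i)) * ((u - z) j)) := by
            refine Finset.sum_congr rfl fun j _ => ?_
            rw [hfz j, add_mul, Finset.sum_mul]
        _ = (∑ j, z j * ((u - z) j))
              + ∑ i, σ (A.mulVec (z + b) i) * (A.mulVec (u + b) i - A.mulVec (z + b) i) := by
            rw [Finset.sum_add_distrib]
            congr 1
            rw [Finset.sum_comm]
            refine Finset.sum_congr rfl fun i _ => ?_
            rw [hdiff z u i, Finset.mul_sum]
            exact Finset.sum_congr rfl fun j _ => by ring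
    have hsq : (1/2 : ℝ) * ∑ j, (u j) ^ 2
        = (1/2) * (∑ j, (z j) ^ 2) + (∑ j, z j * ((u - z) j))
          + (1/2) * ∑ j, ((u - z) j) ^ 2 := by
      rw [Finset.mul_sum, Finset.mul_sum, Finset.mul_sum, ← Finset.sum_add_distrib,
        ← Finset.sum_add_distrib]
      refine Finset.sum_congr rfl fun j _ => ?_
      simp only [PiLp.sub_apply]
      ring
    rw [hΦ u, hΦ z, hns u, hns z, hgrad, hsq]
    rw [Finset.sum_congr rfl fun i _ => hsplit i, Finset.sum_add_distrib,
      Finset.sum_sub_distrib]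
    ring
  have key : ∀ z u : EuclideanSpace ℝ (Fin n),
      Φ z + (∑ j, (z - f z) j * (u - z) j) ≤ Φ u := by
    intro z u
    rw [decomp z u]
    have h1 : 0 ≤ (1/2 : ℝ) * ∑ j, ((u - z) j) ^ 2 :=
      mul_nonneg (by norm_num) (Finset.sum_nonneg fun j _ => sq_nonneg _)
    have h2 : 0 ≤ ∑ i, ((∫ t in (A.mulVec (z + b) i)..(A.mulVec (u + b) i), σ t)
        - σ (A.mulVec (z + b) i) * (A.mulVec (u + b) i - A.mulVec (z + b) i)) :=
      Finset.sum_nonneg fun i _ => by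
        have := aux_int_lb hcont hmono (A.mulVec (z + b) i) (A.mulVec (u + b) i)
        linarith
    linarith
  constructor
  · -- convexity
    refine ⟨convex_univ, ?_⟩
    rintro x - y - t s ht hs hts
    have h1 := key (t • x + s • y) x
    have h2 := key (t • x + s • y) y
    set w := t • x + s • y with hw
    have hz : t * (∑ j, (w - f w) j * (x - w) j) + s * (∑ j, (w - f w) j * (y - w) j) = 0 := by
      rw [Finset.mul_sum, Finset.mul_sum, ← Finset.sum_add_distrib]
      refine Finset.sum_eq_zero fun j _ => ?_
      have hwj : w j = t * x j + s * y j := by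
        simp [hw, PiLp.add_apply, PiLp.smul_apply, smul_eq_mul]
      simp only [PiLp.sub_apply]
      have h0 : t * (x j - w j) + s * (y j - w j) = 0 := by
        rw [hwj]; linear_combination (-(t * x j + s * y j)) * hts
      linear_combination (w j - f w j) * h0
    have h3 : t * Φ w + s * Φ w = Φ w := by rw [← add_mul, hts, one_mul]
    simp only [smul_eq_mul]
    linarith [mul_le_mul_of_nonneg_left h1 ht, mul_le_mul_of_nonneg_left h2 hs, hz, h3]
  · intro z
    constructor
    · -- minimizer → fixed point
      intro hmin
      set C : ℝ := ∑ i, ∑ j, (A i j) ^ 2 with hC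
      have hC0 : 0 ≤ C := Finset.sum_nonneg fun i _ => Finset.sum_nonneg fun j _ => sq_nonneg _
      have hD : (0:ℝ) < 1 + L * C := by positivity
      set t : ℝ := 1 / (1 + L * C) with htdef
      have ht0 : 0 < t := by positivity
      set g := z - f z with hg
      set u := z - t • g with hu
      have huz : ∀ j, (u - z) j = -t * g j := by
        intro j
        simp [hu, PiLp.sub_apply, PiLp.smul_apply, smul_eq_mul]
      -- upper bound
      have hub : Φ u ≤ Φ z + (∑ j, g j * (u - z) j) + (1/2) * ∑ j, ((u - z) j) ^ 2
          + L / 2 * C * ∑ j, ((u - z) j) ^ 2 := by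
        rw [decomp z u, ← hg]
        have hbd : ∑ i, ((∫ t' in (A.mulVec (z + b) i)..(A.mulVec (u + b) i), σ t')
            - σ (A.mulVec (z + b) i) * (A.mulVec (u + b) i - A.mulVec (z + b) i))
            ≤ L / 2 * C * ∑ j, ((u - z) j) ^ 2 := by
          have hterm : ∀ i : Fin m, ((∫ t' in (A.mulVec (z + b) i)..(A.mulVec (u + b) i), σ t')
              - σ (A.mulVec (z + b) i) * (A.mulVec (u + b) i - A.mulVec (z + b) i))
              ≤ L / 2 * ((∑ j, (A i j) ^ 2) * ∑ j, ((u - z) j) ^ 2) := by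
            intro i
            have h1 := aux_int_ub hcont hlip (A.mulVec (z + b) i) (A.mulVec (u + b) i)
            have h2 : (A.mulVec (u + b) i - A.mulVec (z + b) i) ^ 2
                ≤ (∑ j, (A i j) ^ 2) * ∑ j, ((u - z) j) ^ 2 := by
              rw [hdiff z u i]
              exact Finset.sum_mul_sq_le_sq_mul_sq _ _ _
            nlinarith
          calc _ ≤ ∑ i, L / 2 * ((∑ j, (A i j) ^ 2) * ∑ j, ((u - z) j) ^ 2) :=
                Finset.sum_le_sum fun i _ => hterm i
            _ = L / 2 * C * ∑ j, ((u - z) j) ^ 2 := by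
                rw [← Finset.mul_sum, ← Finset.sum_mul]; ring
        linarith
      have hsum : ∀ Sg : ℝ, Sg = ∑ j, (g j) ^ 2 → Φ u ≤ Φ z - t / 2 * Sg := by
        intro Sg hSg
        have e1 : (∑ j, g j * (u - z) j) = -t * Sg := by
          rw [hSg, Finset.mul_sum]
          exact Finset.sum_congr rfl fun j _ => by rw [huz j]; ring
        have e2 : (∑ j, ((u - z) j) ^ 2) = t ^ 2 * Sg := by
          rw [hSg, Finset.mul_sum]
          exact Finset.sum_congr rfl fun j _ => by rw [huz j]; ring
        rw [e1, e2] at hub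
        have htD : t * (1 + L * C) = 1 := by
          rw [htdef]; field_simp
        have h4 : t ^ 2 * (1 + L * C) = t := by rw [pow_two, mul_assoc, htD, mul_one]
        have h5 : t ^ 2 * (1 + L * C) * Sg = t * Sg := by rw [h4]
        linarith [h5]
      have hmin' := hmin u
      have hSg0 : (∑ j, (g j) ^ 2) = 0 := by
        have := hsum _ rfl
        have hSgnn : 0 ≤ ∑ j, (g j) ^ 2 :=
          Finset.sum_nonneg fun j _ => sq_nonneg _
        nlinarith
      have hgz : g = 0 := by
        ext j
        have := (Finset.sum_eq_zero_iff_of_nonneg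
          (fun j (_ : j ∈ Finset.univ) => sq_nonneg (g j))).mp hSg0 j (Finset.mem_univ j)
        have := sq_eq_zero_iff.mp this
        simpa using this
      have h6 : z - f z = 0 := hgz
      exact sub_eq_zero.mp h6
    · intro hz u
      have := key z u
      rw [← hz] at this
      simpa using this
end

section
/- Let σ : ℝ → ℝ be monotone and L-Lipschitz for some L > 0, i.e. 0 ≤ (σ(a) − σ(c))/(a − c) ≤ L for all reals a ≠ c, and assume L·‖A‖₂² ≤ 1. Then there exists a convex differentiable function φ : ℝⁿ → ℝ such that for every z ∈ ℝⁿ, z is a global minimizer of φ if and only if z is a solution of the equilibrium equation z = f(z). -/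
open Matrix

/-- The L2 operator norm of a real matrix: the operator norm of the induced linear map
between Euclidean spaces. -/
noncomputable def l2OpNorm {α β : Type} [Fintype α] [Fintype β] [DecidableEq β]
    (A : Matrix α β ℝ) : ℝ :=
  ‖LinearMap.toContinuousLinearMap (Matrix.toEuclideanLin A)‖

lemma auxSumConvex {E ι : Type*} [AddCommGroup E] [Module ℝ E] (s : Finset ι) (F : ι → E → ℝ)
    (h : ∀ i ∈ s, ConvexOn ℝ Set.univ (F i)) :
    ConvexOn ℝ Set.univ (fun z => ∑ i ∈ s, F i z) := by
  induction s using Finset.cons_induction with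
  | empty => simpa using convexOn_const (0:ℝ) convex_univ
  | cons a s ha ih =>
      simp only [Finset.sum_cons]
      exact (h a (Finset.mem_cons_self _ _)).add
        (ih fun i hi => h i (Finset.mem_cons.mpr (Or.inr hi)))

lemma auxMin {E : Type*} [NormedAddCommGroup E] [NormedSpace ℝ E] {φ : E → ℝ}
    (hc : ConvexOn ℝ Set.univ φ) {z : E} (hd : HasFDerivAt φ (0 : E →L[ℝ] ℝ) z) (u : E) :
    φ z ≤ φ u := by
  have hc' : HasDerivAt (fun t : ℝ => z + t • (u - z)) (u - z) 0 := by
    simpa using ((hasDerivAt_id (0:ℝ)).smul_const (u - z)).const_add z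
  have hcomp : HasDerivAt (fun t : ℝ => φ (z + t • (u - z))) 0 0 := by
    have h0 : z + (0:ℝ) • (u - z) = z := by simp
    have := HasFDerivAt.comp_hasDerivAt 0 (h0 ▸ hd) hc'
    exact this
  have hslope : Filter.Tendsto (slope (fun t : ℝ => φ (z + t • (u - z))) 0)
      (nhdsWithin 0 (Set.Ioi 0)) (nhds 0) :=
    (hasDerivAt_iff_tendsto_slope.mp hcomp).mono_left
      (nhdsWithin_mono _ (fun x hx => ne_of_gt hx))
  have hev : ∀ᶠ t in nhdsWithin (0:ℝ) (Set.Ioi 0),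
      slope (fun t : ℝ => φ (z + t • (u - z))) 0 t ≤ φ u - φ z := by
    filter_upwards [Ioc_mem_nhdsGT_of_mem (Set.left_mem_Ico.mpr one_pos)] with t ht
    have h0t : 0 < t := ht.1
    have ht1 : t ≤ 1 := ht.2
    have hzt : z + t • (u - z) = (1 - t) • z + t • u := by
      rw [smul_sub, sub_smul, one_smul]; abel
    have hcv := hc.2 (Set.mem_univ z) (Set.mem_univ u)
      (by linarith : (0:ℝ) ≤ 1 - t) h0t.le (by ring)
    rw [slope_def_field]
    rw [div_le_iff₀ (by simpa using h0t)]
    have h2 : φ ((1-t) • z + t • u) ≤ (1-t) * φ z + t * φ u := by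
      simpa [smul_eq_mul] using hcv
    rw [hzt]
    simp only [zero_smul, add_zero, sub_zero]
    nlinarith [h2]
  have hfin := le_of_tendsto hslope hev
  linarith

/-- If `σ` is monotone and `L`-Lipschitz with `L‖A‖₂² ≤ 1`, then there exists a
convex differentiable function `φ` whose global minimizers are exactly the solutions of the
equilibrium equation `z = f z`, where `f z = −Aᵀ σ (A (z + b))`. -/
theorem stmt1 {m n : ℕ} (A : Matrix (Fin m) (Fin n) ℝ) (b : EuclideanSpace ℝ (Fin n))
    (σ : ℝ → ℝ) (L : ℝ) (hL : 0 < L)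
    (hσ : ∀ a c : ℝ, a ≠ c →
      0 ≤ (σ a - σ c) / (a - c) ∧ (σ a - σ c) / (a - c) ≤ L)
    (hA : L * l2OpNorm A ^ 2 ≤ 1)
    (f : EuclideanSpace ℝ (Fin n) → EuclideanSpace ℝ (Fin n))
    (hf : ∀ z, f z = -(Aᵀ.mulVec (fun i => σ (A.mulVec (z + b) i)))) :
    ∃ φ : EuclideanSpace ℝ (Fin n) → ℝ,
      ConvexOn ℝ Set.univ φ ∧ Differentiable ℝ φ ∧
      ∀ z, (∀ u, φ z ≤ φ u) ↔ z = f z := by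
  classical
  -- σ is monotone
  have hmono : Monotone σ := by
    intro a c hac
    rcases eq_or_lt_of_le hac with rfl | h
    · exact le_refl _
    · have h1 := (hσ c a (ne_of_gt h)).1
      have h2 : 0 ≤ (σ c - σ a) / (c - a) * (c - a) :=
        mul_nonneg h1 (sub_pos.mpr h).le
      rw [div_mul_cancel₀ _ (sub_ne_zero.mpr (ne_of_gt h))] at h2
      linarith
  -- σ is Lipschitz, hence continuous
  have hcont : Continuous σ := by
    have : LipschitzWith (Real.toNNReal L) σ := by
      apply LipschitzWith.of_dist_le_mul
      intro a c
      rcases eq_or_ne a c with rfl | hne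
      · simp
      · have h1 := (hσ a c hne).1
        have h2 := (hσ a c hne).2
        rw [Real.dist_eq, Real.dist_eq, Real.coe_toNNReal _ hL.le]
        have habs : |(σ a - σ c) / (a - c)| ≤ L := abs_le.mpr ⟨by linarith, h2⟩
        calc |σ a - σ c| = |(σ a - σ c) / (a - c)| * |a - c| := by
              rw [← abs_mul, div_mul_cancel₀ _ (sub_ne_zero.mpr hne)]
          _ ≤ L * |a - c| := mul_le_mul_of_nonneg_right habs (abs_nonneg _)
    exact this.continuous
  -- antiderivative of σ
  set g : ℝ → ℝ := fun t => ∫ s in (0:ℝ)..t, σ s with hgdef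
  have hg : ∀ t, HasDerivAt g (σ t) t :=
    fun t => (hcont.integral_hasStrictDerivAt 0 t).hasDerivAt
  have hgconv : ConvexOn ℝ Set.univ g := by
    refine MonotoneOn.convexOn_of_deriv convex_univ ?_ ?_ ?_
    · exact (Differentiable.continuous fun t => (hg t).differentiableAt).continuousOn
    · intro t _
      exact (hg t).differentiableAt.differentiableWithinAt
    · intro a _ c _ hac
      rw [(hg a).deriv, (hg c).deriv]
      exact hmono hac
  -- rows of A
  set r : Fin m → EuclideanSpace ℝ (Fin n) := fun i => WithLp.toLp 2 (fun j => A i j) with hrdef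
  have hinner : ∀ (i : Fin m) (v : EuclideanSpace ℝ (Fin n)),
      (inner ℝ (r i) v : ℝ) = A.mulVec v i := by
    intro i v
    simp [hrdef, PiLp.inner_apply, RCLike.inner_apply, conj_trivial,
      Matrix.mulVec, dotProduct]
    exact Finset.sum_congr rfl fun _ _ => mul_comm _ _
  -- the potential
  set φ : EuclideanSpace ℝ (Fin n) → ℝ :=
    fun z => (1/2 : ℝ) * (inner ℝ z z : ℝ) + ∑ i, g ((inner ℝ (r i) (z + b) : ℝ)) with hφdef
  -- convexity
  have hconv : ConvexOn ℝ Set.univ φ := by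
    have c1 : ConvexOn ℝ Set.univ
        (fun z : EuclideanSpace ℝ (Fin n) => (1/2 : ℝ) * (inner ℝ z z : ℝ)) := by
      constructor
      · exact convex_univ
      · intro x _ y _ a c ha hc hac
        simp only [smul_eq_mul]
        have hxy : (0:ℝ) ≤ inner ℝ (x - y) (x - y) := real_inner_self_nonneg
        have e1 : (inner ℝ (a • x + c • y) (a • x + c • y) : ℝ)
            = a^2 * (inner ℝ x x : ℝ) + 2*(a*c) * (inner ℝ x y : ℝ) + c^2 * (inner ℝ y y : ℝ) := by
          rw [real_inner_add_add_self, real_inner_smul_left, real_inner_smul_left,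
            real_inner_smul_left, real_inner_smul_right, real_inner_smul_right,
            real_inner_smul_right]
          ring
        have e2 : (inner ℝ (x - y) (x - y) : ℝ)
            = (inner ℝ x x : ℝ) - 2 * (inner ℝ x y : ℝ) + (inner ℝ y y : ℝ) := by
          rw [real_inner_sub_sub_self]
        have hc' : c = 1 - a := by linarith
        subst hc'
        have h3 : a * (1/2 * (inner ℝ x x : ℝ)) + (1 - a) * (1/2 * (inner ℝ y y : ℝ))
            - 1/2 * (inner ℝ (a • x + (1 - a) • y) (a • x + (1 - a) • y) : ℝ)
            = (a * (1 - a) / 2) * (inner ℝ (x - y) (x - y) : ℝ) := by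
          rw [e1, e2]; ring
        have h4 : 0 ≤ a * (1 - a) * (inner ℝ (x - y) (x - y) : ℝ) :=
          mul_nonneg (mul_nonneg ha hc) hxy
        linarith
    have c2 : ConvexOn ℝ Set.univ
        (fun z : EuclideanSpace ℝ (Fin n) => ∑ i, g ((inner ℝ (r i) (z + b) : ℝ))) := by
      refine auxSumConvex _ _ (fun i _ => ?_)
      constructor
      · exact convex_univ
      · intro x _ y _ a c ha hc hac
        have hb : (a • x + c • y) + b = a • (x + b) + c • (y + b) := by
          have hbb : a • b + c • b = b := by rw [← add_smul, hac, one_smul]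
          rw [smul_add, smul_add]
          rw [show a • x + a • b + (c • y + c • b) = (a • x + c • y) + (a • b + c • b) by abel,
            hbb]
        have hlin : (inner ℝ (r i) ((a • x + c • y) + b) : ℝ)
            = a * (inner ℝ (r i) (x + b) : ℝ) + c * (inner ℝ (r i) (y + b) : ℝ) := by
          rw [hb]
          rw [inner_add_right (𝕜 := ℝ), real_inner_smul_right, real_inner_smul_right]
        have hcv := hgconv.2 (Set.mem_univ ((inner ℝ (r i) (x + b) : ℝ)))
          (Set.mem_univ ((inner ℝ (r i) (y + b) : ℝ))) ha hc hac
        simp only [smul_eq_mul] at hcv ⊢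
        rw [hlin]
        exact hcv
    exact c1.add c2
  -- gradient computation
  have hgrad : ∀ z : EuclideanSpace ℝ (Fin n), HasFDerivAt φ ((innerSL ℝ) (z - f z)) z := by
    intro z
    have h1 : HasFDerivAt
        (fun z : EuclideanSpace ℝ (Fin n) => (1/2 : ℝ) * (inner ℝ z z : ℝ))
        ((1/2 : ℝ) • ((fderivInnerCLM ℝ (z, z)).comp
          ((ContinuousLinearMap.id ℝ (EuclideanSpace ℝ (Fin n))).prod
            (ContinuousLinearMap.id ℝ (EuclideanSpace ℝ (Fin n)))))) z := by
      have := ((hasFDerivAt_id z).inner ℝ (hasFDerivAt_id z)).const_smul ((1:ℝ)/2)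
      exact this
    have h2 : ∀ i : Fin m, HasFDerivAt
        (fun z : EuclideanSpace ℝ (Fin n) => g ((inner ℝ (r i) (z + b) : ℝ)))
        (σ ((inner ℝ (r i) (z + b) : ℝ)) • (innerSL ℝ (r i))) z := by
      intro i
      have h0 : HasFDerivAt (fun z : EuclideanSpace ℝ (Fin n) => z + b)
          (ContinuousLinearMap.id ℝ (EuclideanSpace ℝ (Fin n))) z :=
        (hasFDerivAt_id z).add_const b
      have ha : HasFDerivAt
          (fun z : EuclideanSpace ℝ (Fin n) => (inner ℝ (r i) (z + b) : ℝ))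
          (innerSL ℝ (r i)) z := by
        have := ((innerSL ℝ (r i)).hasFDerivAt).comp z h0
        exact this
      exact (hg _).comp_hasFDerivAt z ha
    have hsum := HasFDerivAt.fun_sum (u := Finset.univ) (fun i (_ : i ∈ Finset.univ) => h2 i)
    have htot := h1.add hsum
    refine htot.congr_fderiv ?_
    apply ContinuousLinearMap.ext
    intro h
    simp only [ContinuousLinearMap.add_apply, ContinuousLinearMap.smul_apply,
      ContinuousLinearMap.coe_comp', Function.comp_apply, ContinuousLinearMap.prod_apply,
      ContinuousLinearMap.coe_id', id_eq, fderivInnerCLM_apply, ContinuousLinearMap.coe_sum',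
      Finset.sum_apply, innerSL_apply_apply, smul_eq_mul]
    have hzz : (1/2 : ℝ) * ((inner ℝ z h : ℝ) + (inner ℝ h z : ℝ)) = (inner ℝ z h : ℝ) := by
      rw [real_inner_comm h z]; ring
    rw [hzz, show f z = -WithLp.toLp 2 (Aᵀ *ᵥ fun i => σ ((A *ᵥ (z + b).ofLp) i)) from by
      ext i; simp [hf z], sub_neg_eq_add, inner_add_left]
    congr 1
    simp only [hinner, PiLp.inner_apply, RCLike.inner_apply, conj_trivial]
    simp only [Matrix.mulVec, dotProduct, Matrix.transpose_apply, Finset.mul_sum,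
      Finset.sum_mul]
    rw [Finset.sum_comm]
    refine Finset.sum_congr rfl fun j _ => ?_
    refine Finset.sum_congr rfl fun i _ => ?_
    ring
  refine ⟨φ, hconv, fun z => (hgrad z).differentiableAt, fun z => ⟨?_, ?_⟩⟩
  · intro hmin
    have hloc : IsLocalMin φ z := Filter.Eventually.of_forall hmin
    have h0 : fderiv ℝ φ z = 0 := hloc.fderiv_eq_zero
    rw [(hgrad z).fderiv] at h0
    have h1 : (inner ℝ (z - f z) (z - f z) : ℝ) = 0 := by
      have := congrArg (fun T : EuclideanSpace ℝ (Fin n) →L[ℝ] ℝ => T (z - f z)) h0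
      simpa only [innerSL_apply_apply, ContinuousLinearMap.zero_apply] using this
    have h2 : z - f z = 0 := by
      rwa [inner_self_eq_zero] at h1
    exact sub_eq_zero.mp h2
  · intro hz u
    have h0 : HasFDerivAt φ (0 : EuclideanSpace ℝ (Fin n) →L[ℝ] ℝ) z := by
      have := hgrad z
      rw [← hz, sub_self] at this
      simpa using this
    exact auxMin hconv h0 u
end

section
/- Let K be a real h×h matrix, G a real m×n matrix, and K ⊗ G their Kronecker product. Let σ : ℝ → ℝ be monotone and 1-Lipschitz, i.e. 0 ≤ (σ(a) − σ(c))/(a − c) ≤ 1 for all reals a ≠ c, and let b̂ be a fixed vector of dimension h·n. Define f(z) = −(K ⊗ G)ᵀ σ((K ⊗ G)(z + b̂)), where σ is applied componentwise. If ‖K‖₂·‖G‖₂ < 1, then the equilibrium equation z = f(z) has exactly one solution z. -/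
open Matrix Kronecker

lemma l2OpNorm_nonneg {α β : Type} [Fintype α] [Fintype β] [DecidableEq β]
    (A : Matrix α β ℝ) : 0 ≤ l2OpNorm A := norm_nonneg _

lemma mulVec_sq_le {α β : Type} [Fintype α] [Fintype β] [DecidableEq β]
    (A : Matrix α β ℝ) (x : β → ℝ) :
    ∑ i, (A.mulVec x i) ^ 2 ≤ (l2OpNorm A) ^ 2 * ∑ j, (x j) ^ 2 := by
  have h := (LinearMap.toContinuousLinearMap (Matrix.toEuclideanLin A)).le_opNorm
    ((WithLp.equiv 2 (β → ℝ)).symm x)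
  have hL : ‖(LinearMap.toContinuousLinearMap (Matrix.toEuclideanLin A))
      ((WithLp.equiv 2 (β → ℝ)).symm x)‖ = Real.sqrt (∑ i, (A.mulVec x i) ^ 2) := by
    rw [EuclideanSpace.norm_eq]
    congr 1
    refine Finset.sum_congr rfl fun i _ => ?_
    simp [Real.norm_eq_abs, sq_abs, Matrix.toEuclideanLin_apply]
  have hR : ‖((WithLp.equiv 2 (β → ℝ)).symm x)‖ = Real.sqrt (∑ j, (x j) ^ 2) := by
    rw [EuclideanSpace.norm_eq]
    congr 1
    refine Finset.sum_congr rfl fun j _ => ?_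
    simp [Real.norm_eq_abs, sq_abs]
  rw [hL, hR] at h
  have ha : (0:ℝ) ≤ ∑ i, (A.mulVec x i) ^ 2 := Finset.sum_nonneg fun _ _ => sq_nonneg _
  have hb : (0:ℝ) ≤ ∑ j, (x j) ^ 2 := Finset.sum_nonneg fun _ _ => sq_nonneg _
  have h' : Real.sqrt (∑ i, (A.mulVec x i) ^ 2) ≤ l2OpNorm A * Real.sqrt (∑ j, (x j) ^ 2) := h
  nlinarith [Real.sq_sqrt ha, Real.sq_sqrt hb, Real.sqrt_nonneg (∑ i, (A.mulVec x i) ^ 2),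
    Real.sqrt_nonneg (∑ j, (x j) ^ 2), l2OpNorm_nonneg A, h']

lemma l2OpNorm_transpose {α β : Type} [Fintype α] [Fintype β] [DecidableEq α] [DecidableEq β]
    (A : Matrix α β ℝ) : l2OpNorm Aᵀ = l2OpNorm A := by
  have := Matrix.l2_opNorm_conjTranspose A
  rw [Matrix.conjTranspose_eq_transpose_of_trivial] at this
  simpa [Matrix.l2_opNorm_def, l2OpNorm, LinearEquiv.trans_apply] using this

lemma kron_sq_le {h m n : ℕ} (K : Matrix (Fin h) (Fin h) ℝ) (G : Matrix (Fin m) (Fin n) ℝ)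
    (v : Fin h × Fin n → ℝ) :
    ∑ p, ((K ⊗ₖ G).mulVec v p) ^ 2 ≤
      (l2OpNorm K * l2OpNorm G) ^ 2 * ∑ p, (v p) ^ 2 := by
  set W : Fin h → Fin m → ℝ := fun k j => G.mulVec (fun l => v (k, l)) j with hW
  have hentry : ∀ i j, (K ⊗ₖ G).mulVec v (i, j) = ∑ k, K i k * W k j := by
    intro i j
    simp only [Matrix.mulVec, dotProduct, Fintype.sum_prod_type, hW,
      Matrix.kroneckerMap_apply, Finset.mul_sum]
    exact Finset.sum_congr rfl fun k _ => Finset.sum_congr rfl fun l _ => by ring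
  calc ∑ p, ((K ⊗ₖ G).mulVec v p) ^ 2
      = ∑ j, ∑ i, (K.mulVec (fun k => W k j) i) ^ 2 := by
        rw [Fintype.sum_prod_type, Finset.sum_comm]
        exact Finset.sum_congr rfl fun j _ => Finset.sum_congr rfl fun i _ => by
          rw [hentry i j]; rfl
    _ ≤ ∑ j, (l2OpNorm K) ^ 2 * ∑ k, (W k j) ^ 2 :=
        Finset.sum_le_sum fun j _ => mulVec_sq_le K _
    _ = (l2OpNorm K) ^ 2 * ∑ k, ∑ j, (W k j) ^ 2 := by
        rw [← Finset.mul_sum, Finset.sum_comm]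
    _ ≤ (l2OpNorm K) ^ 2 * ∑ k, ((l2OpNorm G) ^ 2 * ∑ l, (v (k, l)) ^ 2) := by
        exact mul_le_mul_of_nonneg_left
          (Finset.sum_le_sum fun k _ => mulVec_sq_le G (fun l => v (k, l))) (sq_nonneg _)
    _ = (l2OpNorm K * l2OpNorm G) ^ 2 * ∑ p, (v p) ^ 2 := by
        rw [Fintype.sum_prod_type, mul_pow, ← Finset.mul_sum, ← mul_assoc]

/-- For `K : h×h`, `G : m×n`, `σ` monotone and 1-Lipschitz, and a fixed vector
`b̂` of dimension `h·n`, if `‖K‖₂ ⬝ ‖G‖₂ < 1`, then the equilibrium equation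
`z = −(K ⊗ G)ᵀ σ ((K ⊗ G)(z + b̂))` has exactly one solution. -/
theorem stmt4 {h m n : ℕ} (K : Matrix (Fin h) (Fin h) ℝ) (G : Matrix (Fin m) (Fin n) ℝ)
    (σ : ℝ → ℝ)
    (hσ : ∀ a c : ℝ, a ≠ c →
      0 ≤ (σ a - σ c) / (a - c) ∧ (σ a - σ c) / (a - c) ≤ 1)
    (bhat : Fin h × Fin n → ℝ)
    (f : (Fin h × Fin n → ℝ) → (Fin h × Fin n → ℝ))
    (hf : ∀ z, f z = -((K ⊗ₖ G)ᵀ.mulVec (fun i => σ ((K ⊗ₖ G).mulVec (z + bhat) i))))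
    (hKG : l2OpNorm K * l2OpNorm G < 1) :
    ∃! z : Fin h × Fin n → ℝ, z = f z := by
  set c : ℝ := l2OpNorm K * l2OpNorm G with hc
  have hc0 : 0 ≤ c := mul_nonneg (l2OpNorm_nonneg K) (l2OpNorm_nonneg G)
  have hc2 : c ^ 2 < 1 := by nlinarith
  set A : Matrix (Fin h × Fin m) (Fin h × Fin n) ℝ := K ⊗ₖ G with hA
  -- pointwise Lipschitz bound for σ
  have hσ2 : ∀ a b : ℝ, (σ a - σ b) ^ 2 ≤ (a - b) ^ 2 := by
    intro a b
    rcases eq_or_ne a b with rfl | hne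
    · simp
    · obtain ⟨h0, h1⟩ := hσ a b hne
      have hd : a - b ≠ 0 := sub_ne_zero.mpr hne
      have he : σ a - σ b = ((σ a - σ b) / (a - b)) * (a - b) := (div_mul_cancel₀ _ hd).symm
      rw [he, mul_pow]
      nlinarith [mul_nonneg (mul_nonneg (sub_nonneg.mpr h1) h0) (sq_nonneg (a - b)),
        mul_nonneg (sub_nonneg.mpr h1) (sq_nonneg (a - b))]
  -- transpose Kronecker bound
  have hT : ∀ v : Fin h × Fin m → ℝ, ∑ p, (Aᵀ.mulVec v p) ^ 2 ≤ c ^ 2 * ∑ p, (v p) ^ 2 := by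
    intro v
    have hAT : Aᵀ = Kᵀ ⊗ₖ Gᵀ := Matrix.kroneckerMap_transpose _ K G
    rw [hAT]
    have := kron_sq_le Kᵀ Gᵀ v
    rwa [l2OpNorm_transpose, l2OpNorm_transpose] at this
  -- key sum-of-squares contraction estimate
  have key : ∀ x y : Fin h × Fin n → ℝ,
      ∑ p, (f x p - f y p) ^ 2 ≤ (c ^ 2) ^ 2 * ∑ p, (x p - y p) ^ 2 := by
    intro x y
    set u : Fin h × Fin m → ℝ := fun i => σ (A.mulVec (x + bhat) i) with hu
    set w : Fin h × Fin m → ℝ := fun i => σ (A.mulVec (y + bhat) i) with hw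
    have h1 : ∀ p, f x p - f y p = (Aᵀ.mulVec (w - u)) p := by
      intro p
      rw [hf, hf]
      simp only [Matrix.mulVec_sub, Pi.sub_apply, Pi.neg_apply]
      ring
    have h2 : ∀ p, A.mulVec (y + bhat) p - A.mulVec (x + bhat) p = A.mulVec (y - x) p := by
      intro p
      have hxy : y - x = (y + bhat) - (x + bhat) := by abel
      rw [hxy, Matrix.mulVec_sub, Pi.sub_apply]
    calc ∑ p, (f x p - f y p) ^ 2
        = ∑ p, (Aᵀ.mulVec (w - u) p) ^ 2 := by
          exact Finset.sum_congr rfl fun p _ => by rw [h1 p]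
      _ ≤ c ^ 2 * ∑ p, (w p - u p) ^ 2 := hT _
      _ ≤ c ^ 2 * ∑ p, (A.mulVec (y - x) p) ^ 2 := by
          refine mul_le_mul_of_nonneg_left (Finset.sum_le_sum fun p _ => ?_) (sq_nonneg c)
          rw [← h2 p]
          exact hσ2 _ _
      _ ≤ c ^ 2 * (c ^ 2 * ∑ p, ((y - x) p) ^ 2) :=
          mul_le_mul_of_nonneg_left (kron_sq_le K G _) (sq_nonneg c)
      _ = (c ^ 2) ^ 2 * ∑ p, (x p - y p) ^ 2 := by
          rw [← mul_assoc, ← pow_mul]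
          congr 1
          · ring_nf
          · exact Finset.sum_congr rfl fun p _ => by
              simp only [Pi.sub_apply]; ring
  -- set up the contraction on Euclidean space
  let E := EuclideanSpace ℝ (Fin h × Fin n)
  let g : E → E := fun x => WithLp.toLp 2 (f (WithLp.ofLp x))
  set κ : NNReal := ⟨c ^ 2, sq_nonneg c⟩ with hκ
  have hlip : LipschitzWith κ g := by
    refine LipschitzWith.of_dist_le_mul fun x y => ?_
    rw [EuclideanSpace.dist_eq, EuclideanSpace.dist_eq]
    simp only [Real.dist_eq, sq_abs]
    have hkey := key x y
    have hcoe : (κ : ℝ) = c ^ 2 := rfl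
    rw [hcoe]
    calc Real.sqrt (∑ p, (g x p - g y p) ^ 2)
        ≤ Real.sqrt ((c ^ 2) ^ 2 * ∑ p, (x p - y p) ^ 2) := Real.sqrt_le_sqrt hkey
      _ = c ^ 2 * Real.sqrt (∑ p, (x p - y p) ^ 2) := by
          rw [Real.sqrt_mul (sq_nonneg _), Real.sqrt_sq (sq_nonneg c)]
  have hC : ContractingWith κ g := by
    refine ⟨?_, hlip⟩
    have : (κ : ℝ) < 1 := hc2
    exact_mod_cast this
  obtain ⟨z, hz⟩ : ∃ z : E, g z = z := ⟨ContractingWith.fixedPoint g hC, hC.fixedPoint_isFixedPt⟩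
  refine ⟨z.ofLp, congrArg WithLp.ofLp hz.symm, fun y hy => ?_⟩
  exact congrArg WithLp.ofLp (hC.fixedPoint_unique' (show Function.IsFixedPt g (WithLp.toLp 2 y) from congrArg (WithLp.toLp 2) hy.symm) hz)
end

section
/- Let σ : ℝ → ℝ be monotone and 1-Lipschitz, i.e. 0 ≤ (σ(a) − σ(c))/(a − c) ≤ 1 for all reals a ≠ c, assume ‖A‖₂ ≤ 1, and let σ̃(a) = ∫₀ᵃ σ(t) dt. Define ψ : ℝⁿ → ℝ by ψ(z) = (1/4)‖z‖² − (1/2)·Σ_{i=1}^m σ̃((A(z + b))_i). Then ψ is convex, and at every z ∈ ℝⁿ its gradient (with respect to the Euclidean inner product) is ∇ψ(z) = (1/2)(z + f(z)) = (1/2)(z − Aᵀσ(A(z + b))). -/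
open Matrix
open scoped RealInnerProductSpace

set_option maxHeartbeats 2000000 in
/-- For `σ` monotone and 1-Lipschitz, `‖A‖₂ ≤ 1`, and
`ψ z = (1/4)‖z‖² − (1/2) ∑ i, σ̃ ((A (z + b)) i)` with `σ̃ a = ∫ t in 0..a, σ t`, the function
`ψ` is convex with gradient `∇ψ(z) = (1/2)(z + f z)`, where `f z = −Aᵀ σ (A (z + b))`. -/
theorem stmt7 {m n : ℕ} (A : Matrix (Fin m) (Fin n) ℝ) (b : EuclideanSpace ℝ (Fin n))
    (σ : ℝ → ℝ)
    (hσ : ∀ a c : ℝ, a ≠ c →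
      0 ≤ (σ a - σ c) / (a - c) ∧ (σ a - σ c) / (a - c) ≤ 1)
    (hA : l2OpNorm A ≤ 1)
    (f : EuclideanSpace ℝ (Fin n) → EuclideanSpace ℝ (Fin n))
    (hf : ∀ z, f z = -(Aᵀ.mulVec (fun i => σ (A.mulVec (z + b) i))))
    (ψ : EuclideanSpace ℝ (Fin n) → ℝ)
    (hψ : ∀ z, ψ z = (1/4) * ‖z‖^2
      - (1/2) * ∑ i, ∫ t in (0:ℝ)..(A.mulVec (z + b) i), σ t) :
    ConvexOn ℝ Set.univ ψ ∧
    ∀ z : EuclideanSpace ℝ (Fin n), HasGradientAt ψ ((1/2 : ℝ) • (z + f z)) z := by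
  classical
  -- basic facts about σ
  have hprod : ∀ p q : ℝ, 0 ≤ (σ p - σ q) * (p - q) ∧ (σ p - σ q) * (p - q) ≤ (p - q)^2 := by
    intro p q
    rcases eq_or_ne p q with h | h
    · simp [h]
    · obtain ⟨h1, h2⟩ := hσ p q h
      have hd : (σ p - σ q) = (σ p - σ q) / (p - q) * (p - q) :=
        (div_mul_cancel₀ _ (sub_ne_zero.2 h)).symm
      constructor
      · rw [hd]; nlinarith [sq_nonneg (p - q)]
      · rw [hd]; nlinarith [sq_nonneg (p - q)]
  have hσcont : Continuous σ := by
    have hlip : LipschitzWith 1 σ := by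
      apply LipschitzWith.of_dist_le_mul
      intro p q
      rcases eq_or_ne p q with h | h
      · simp [h]
      · obtain ⟨h1, h2⟩ := hσ p q h
        have hd : (σ p - σ q) = (σ p - σ q) / (p - q) * (p - q) :=
          (div_mul_cancel₀ _ (sub_ne_zero.2 h)).symm
        rw [Real.dist_eq, Real.dist_eq, NNReal.coe_one, one_mul, hd, abs_mul,
          abs_of_nonneg h1]
        nlinarith [abs_nonneg (p - q)]
    exact hlip.continuous
  -- inner product of a transposed matrix-vector product
  have hAT : ∀ (v : Fin m → ℝ) (d : EuclideanSpace ℝ (Fin n)),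
      @inner ℝ (EuclideanSpace ℝ (Fin n)) _ (WithLp.toLp 2 (Aᵀ.mulVec v)) d = ∑ i, v i * A.mulVec d i := by
    intro v d
    simp only [PiLp.inner_apply, RCLike.inner_apply, conj_trivial, Matrix.mulVec,
      dotProduct, PiLp.toLp_apply, Matrix.transpose_apply, Finset.sum_mul, Finset.mul_sum]
    rw [Finset.sum_comm]
    exact Finset.sum_congr rfl fun i _ => Finset.sum_congr rfl fun j _ => by ring
  have hf' : ∀ z, f z = -(WithLp.toLp 2 (Aᵀ.mulVec (fun i => σ (A.mulVec (z + b) i)))) :=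
    fun z => (WithLp.ofLp_injective 2) (by rw [hf z]; rfl)
  set r : Fin m → EuclideanSpace ℝ (Fin n) :=
    fun i => WithLp.toLp 2 (fun j => A i j) with hr
  have hrow : ∀ (i : Fin m) (v : EuclideanSpace ℝ (Fin n)),
      @inner ℝ (EuclideanSpace ℝ (Fin n)) _ (r i) v = A.mulVec v i := by
    intro i v
    simp only [hr]
    simp [PiLp.inner_apply, RCLike.inner_apply, Matrix.mulVec, dotProduct]
    exact Finset.sum_congr rfl fun j _ => mul_comm _ _
  -- the gradient claim
  have grad : ∀ z : EuclideanSpace ℝ (Fin n), HasGradientAt ψ ((1/2 : ℝ) • (z + f z)) z := by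
    intro z
    have hL : ∀ i, HasFDerivAt (fun w : EuclideanSpace ℝ (Fin n) => A.mulVec (w + b) i)
        (innerSL ℝ (r i)) z := by
      intro i
      have heq : (fun w : EuclideanSpace ℝ (Fin n) => A.mulVec (w + b) i)
          = fun w : EuclideanSpace ℝ (Fin n) => (innerSL ℝ (r i)) w + A.mulVec b i := by
        funext w
        simp only [innerSL_apply_apply, hrow]
        simp [Matrix.mulVec, dotProduct, PiLp.add_apply, mul_add,
          Finset.sum_add_distrib]
      rw [heq]
      exact ((innerSL ℝ (r i)).hasFDerivAt).add_const _
    have hterm : ∀ i, HasFDerivAt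
        (fun w : EuclideanSpace ℝ (Fin n) => ∫ t in (0:ℝ)..(A.mulVec (w + b) i), σ t)
        (σ (A.mulVec (z + b) i) • innerSL ℝ (r i)) z := fun i =>
      ((hσcont.integral_hasStrictDerivAt 0 _).hasDerivAt).comp_hasFDerivAt z (hL i)
    have hsum : HasFDerivAt
        (fun w : EuclideanSpace ℝ (Fin n) => ∑ i, ∫ t in (0:ℝ)..(A.mulVec (w + b) i), σ t)
        (∑ i, σ (A.mulVec (z + b) i) • innerSL ℝ (r i)) z :=
      HasFDerivAt.fun_sum fun i _ => hterm i
    have hsq : HasFDerivAt (fun w : EuclideanSpace ℝ (Fin n) => ‖w‖^2)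
        ((2:ℝ) • (innerSL ℝ z)) z := by
      have h1 := (hasFDerivAt_id (𝕜 := ℝ) z).inner ℝ (hasFDerivAt_id z)
      have h2 : (fun w : EuclideanSpace ℝ (Fin n) => ‖w‖^2)
          = fun w : EuclideanSpace ℝ (Fin n) => ⟪w, w⟫ := by
        funext w; rw [real_inner_self_eq_norm_sq]
      rw [h2]
      refine h1.congr_fderiv (Eq.symm ?_)
      ext v
      simp only [ContinuousLinearMap.smul_apply, innerSL_apply_apply, ContinuousLinearMap.comp_apply,
        ContinuousLinearMap.prod_apply, ContinuousLinearMap.id_apply, fderivInnerCLM_apply,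
        smul_eq_mul, id_eq]
      rw [real_inner_comm v z]; ring
    have H : HasFDerivAt ψ
        ((1/4:ℝ) • ((2:ℝ) • innerSL ℝ z)
          - (1/2:ℝ) • ∑ i, σ (A.mulVec (z + b) i) • innerSL ℝ (r i)) z := by
      have hψ' : ψ = fun w : EuclideanSpace ℝ (Fin n) => (1/4) * ‖w‖^2
          - (1/2) * ∑ i, ∫ t in (0:ℝ)..(A.mulVec (w + b) i), σ t := funext hψ
      rw [hψ']
      exact (hsq.const_mul _).sub (hsum.const_mul _)
    have hdual : (InnerProductSpace.toDual ℝ (EuclideanSpace ℝ (Fin n)))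
          ((1/2 : ℝ) • (z + f z))
        = (1/4:ℝ) • ((2:ℝ) • innerSL ℝ z)
          - (1/2:ℝ) • ∑ i, σ (A.mulVec (z + b) i) • innerSL ℝ (r i) := by
      ext v
      simp only [InnerProductSpace.toDual_apply_apply, ContinuousLinearMap.sub_apply,
        ContinuousLinearMap.smul_apply, ContinuousLinearMap.sum_apply, innerSL_apply_apply,
        smul_eq_mul, real_inner_smul_left, inner_add_left, hrow]
      rw [hf' z]
      rw [inner_neg_left, hAT]
      ring
    exact hasGradientAt_iff_hasFDerivAt.mpr (hdual ▸ H)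
  refine ⟨?_, grad⟩
  -- monotonicity of the gradient
  have mono : ∀ u w : EuclideanSpace ℝ (Fin n),
      0 ≤ ⟪((1/2:ℝ) • (u + f u)) - ((1/2:ℝ) • (w + f w)), u - w⟫ := by
    intro u w
    set d : EuclideanSpace ℝ (Fin n) := u - w with hd
    have hpq : ∀ i, A.mulVec (u + b) i - A.mulVec (w + b) i = A.mulVec d i := by
      intro i
      simp [Matrix.mulVec, dotProduct, PiLp.add_apply, PiLp.sub_apply, hd,
        mul_add, mul_sub, Finset.sum_add_distrib, Finset.sum_sub_distrib]
    set S : ℝ := ∑ i, (σ (A.mulVec (u + b) i) - σ (A.mulVec (w + b) i)) * A.mulVec d i with hS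
    have hinner : ⟪((1/2:ℝ) • (u + f u)) - ((1/2:ℝ) • (w + f w)), d⟫
        = (1/2) * ‖d‖^2 - (1/2) * S := by
      rw [inner_sub_left, real_inner_smul_left, real_inner_smul_left,
        inner_add_left, inner_add_left, hf' u, hf' w, inner_neg_left, inner_neg_left,
        hAT, hAT]
      have h1 : ⟪u, d⟫ - ⟪w, d⟫ = ‖d‖^2 := by
        rw [← inner_sub_left, ← hd, real_inner_self_eq_norm_sq]
      have h2 : (∑ i, σ (A.mulVec (u + b) i) * A.mulVec d i)
          - (∑ i, σ (A.mulVec (w + b) i) * A.mulVec d i) = S := by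
        rw [hS, ← Finset.sum_sub_distrib]
        exact Finset.sum_congr rfl fun i _ => by ring
      linarith [h1, h2]
    have hSn : S ≤ ‖d‖^2 := by
      have hAd : ∑ i, (A.mulVec d i)^2 ≤ ‖d‖^2 := by
        have hcoe : ∀ i, ((LinearMap.toContinuousLinearMap (Matrix.toEuclideanLin A)) d) i
            = A.mulVec d i := fun i => rfl
        have hEd : ∑ i, (A.mulVec d i)^2
            = ‖(LinearMap.toContinuousLinearMap (Matrix.toEuclideanLin A)) d‖^2 := by
          rw [← real_inner_self_eq_norm_sq]
          simp only [PiLp.inner_apply, RCLike.inner_apply, conj_trivial, hcoe, sq]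
        have hle : ‖(LinearMap.toContinuousLinearMap (Matrix.toEuclideanLin A)) d‖
            ≤ l2OpNorm A * ‖d‖ :=
          (LinearMap.toContinuousLinearMap (Matrix.toEuclideanLin A)).le_opNorm d
        have h0 : (0:ℝ) ≤ l2OpNorm A := norm_nonneg _
        have h1 : ‖(LinearMap.toContinuousLinearMap (Matrix.toEuclideanLin A)) d‖ ≤ ‖d‖ := by
          refine hle.trans ?_
          nlinarith [norm_nonneg d]
        rw [hEd]
        exact pow_le_pow_left₀ (norm_nonneg _) h1 2
      calc S ≤ ∑ i, (A.mulVec d i)^2 := by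
              rw [hS]
              apply Finset.sum_le_sum
              intro i _
              have := (hprod (A.mulVec (u + b) i) (A.mulVec (w + b) i)).2
              rwa [hpq i] at this
        _ ≤ ‖d‖^2 := hAd
    rw [hinner]; linarith
  -- convexity via restriction to lines
  refine ⟨convex_univ, ?_⟩
  intro x _ y _ a c ha hc hac
  have hline : ∀ t : ℝ, HasDerivAt (fun t : ℝ => ψ (x + t • (y - x)))
      ⟪(1/2:ℝ) • ((x + t • (y - x)) + f (x + t • (y - x))), y - x⟫ t := by
    intro t
    have h1 : HasDerivAt (fun t : ℝ => x + t • (y - x)) (y - x) t := by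
      simpa using ((hasDerivAt_id t).smul_const (y - x)).const_add x
    have h2 := (grad (x + t • (y - x))).hasFDerivAt.comp_hasDerivAt t h1
    simpa only [Function.comp_def, InnerProductSpace.toDual_apply_apply] using h2
  have hdiff : Differentiable ℝ (fun t : ℝ => ψ (x + t • (y - x))) :=
    fun t => (hline t).differentiableAt
  have hmono : Monotone (deriv (fun t : ℝ => ψ (x + t • (y - x)))) := by
    intro s t hst
    rw [(hline s).deriv, (hline t).deriv]
    rcases eq_or_lt_of_le hst with rfl | hlt
    · exact le_rfl
    · have key := mono (x + t • (y - x)) (x + s • (y - x))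
      have hdiffpt : (x + t • (y - x)) - (x + s • (y - x)) = (t - s) • (y - x) := by
        rw [sub_smul]; abel
      rw [hdiffpt, real_inner_smul_right] at key
      have hpos := nonneg_of_mul_nonneg_right key (by linarith : (0:ℝ) < t - s)
      rw [inner_sub_left] at hpos
      linarith
  have hconv : ConvexOn ℝ Set.univ (fun t : ℝ => ψ (x + t • (y - x))) :=
    hmono.convexOn_univ_of_deriv hdiff
  have hcx : x + c • (y - x) = a • x + c • y := by
    rw [smul_sub]
    have hac' : a = 1 - c := by linarith
    rw [hac', sub_smul, one_smul]; abel
  have hfin := hconv.2 (Set.mem_univ (0:ℝ)) (Set.mem_univ (1:ℝ)) ha hc hac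
  simp only [smul_eq_mul, mul_zero, mul_one, zero_add, zero_smul, add_zero, one_smul,
    add_sub_cancel] at hfin
  rw [hcx] at hfin
  exact hfin
end

section
/- Let σ : ℝ → ℝ be monotone and 1-Lipschitz, i.e. 0 ≤ (σ(a) − σ(c))/(a − c) ≤ 1 for all reals a ≠ c, and assume ‖A‖₂ ≤ 1. Then the map g : ℝⁿ → ℝⁿ defined by g(z) = (1/2)(z + f(z)) is nonexpansive: ‖g(z) − g(z′)‖ ≤ ‖z − z′‖ for all z, z′ ∈ ℝⁿ. -/
open Matrix

lemma l2OpNorm_mulVec {m n : ℕ} (A : Matrix (Fin m) (Fin n) ℝ)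
    (v : EuclideanSpace ℝ (Fin n)) :
    ‖WithLp.toLp 2 (A.mulVec v)‖ ≤ l2OpNorm A * ‖v‖ :=
  (LinearMap.toContinuousLinearMap (Matrix.toEuclideanLin A)).le_opNorm v

lemma l2OpNorm_transpose_s8 {m n : ℕ} (A : Matrix (Fin m) (Fin n) ℝ) :
    l2OpNorm Aᵀ = l2OpNorm A := by
  have h : Aᵀ = Aᴴ := (Matrix.conjTranspose_eq_transpose_of_trivial A).symm
  rw [h]
  unfold l2OpNorm
  rw [Matrix.toEuclideanLin_conjTranspose_eq_adjoint,
    LinearMap.adjoint_toContinuousLinearMap]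
  exact (ContinuousLinearMap.adjoint (𝕜 := ℝ)).norm_map _

lemma euclid_norm_mono {k : ℕ} (x y : EuclideanSpace ℝ (Fin k))
    (h : ∀ i, |x i| ≤ |y i|) : ‖x‖ ≤ ‖y‖ := by
  rw [EuclideanSpace.norm_eq, EuclideanSpace.norm_eq]
  apply Real.sqrt_le_sqrt
  apply Finset.sum_le_sum
  intro i _
  have := h i
  simp only [Real.norm_eq_abs]
  exact pow_le_pow_left₀ (abs_nonneg (x i)) this 2

/-- For `σ` monotone and 1-Lipschitz and `‖A‖₂ ≤ 1`, the map
`g z = (1/2)(z + f z)`, where `f z = −Aᵀ σ (A (z + b))`, is nonexpansive. -/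
theorem stmt8 {m n : ℕ} (A : Matrix (Fin m) (Fin n) ℝ) (b : EuclideanSpace ℝ (Fin n))
    (σ : ℝ → ℝ)
    (hσ : ∀ a c : ℝ, a ≠ c →
      0 ≤ (σ a - σ c) / (a - c) ∧ (σ a - σ c) / (a - c) ≤ 1)
    (hA : l2OpNorm A ≤ 1)
    (f g : EuclideanSpace ℝ (Fin n) → EuclideanSpace ℝ (Fin n))
    (hf : ∀ z, f z = -(Aᵀ.mulVec (fun i => σ (A.mulVec (z + b) i))))
    (hg : ∀ z, g z = (1/2 : ℝ) • (z + f z)) :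
    ∀ z z' : EuclideanSpace ℝ (Fin n), ‖g z - g z'‖ ≤ ‖z - z'‖ := by
  -- σ is 1-Lipschitz
  have hlip : ∀ a c : ℝ, |σ a - σ c| ≤ |a - c| := by
    intro a c
    rcases eq_or_ne a c with h | h
    · simp [h]
    · obtain ⟨h0, h1⟩ := hσ a c h
      have hac : a - c ≠ 0 := sub_ne_zero.mpr h
      have : σ a - σ c = ((σ a - σ c) / (a - c)) * (a - c) := by field_simp
      rw [this, abs_mul]
      have : |(σ a - σ c) / (a - c)| ≤ 1 := abs_le.mpr ⟨by linarith, h1⟩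
      nlinarith [abs_nonneg (a - c)]
  intro z z'
  set w : EuclideanSpace ℝ (Fin n) := z - z' with hw
  set u : EuclideanSpace ℝ (Fin m) := WithLp.toLp 2 (A.mulVec (z + b)) with hu
  set u' : EuclideanSpace ℝ (Fin m) := WithLp.toLp 2 (A.mulVec (z' + b)) with hu'
  set s : EuclideanSpace ℝ (Fin m) := WithLp.toLp 2 (fun i => σ (u i)) with hs
  set s' : EuclideanSpace ℝ (Fin m) := WithLp.toLp 2 (fun i => σ (u' i)) with hs'
  -- bound on ‖u - u'‖
  have huu : u - u' = WithLp.toLp 2 (A.mulVec w) := by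
    rw [hu, hu', ← WithLp.toLp_sub, ← Matrix.mulVec_sub, hw, WithLp.ofLp_sub]
    congr 2
    abel
  have hnu : ‖u - u'‖ ≤ ‖w‖ := by
    rw [huu]
    calc ‖WithLp.toLp 2 (A.mulVec w)‖
        ≤ l2OpNorm A * ‖w‖ := l2OpNorm_mulVec A w
      _ ≤ 1 * ‖w‖ := by gcongr
      _ = ‖w‖ := one_mul _
  -- bound on ‖s - s'‖
  have hns : ‖s - s'‖ ≤ ‖u - u'‖ := by
    apply euclid_norm_mono
    intro i
    exact hlip (u i) (u' i)
  -- f z - f z'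
  have hff : f z - f z' = WithLp.toLp 2 (Aᵀ.mulVec (s' - s)) := by
    rw [← WithLp.toLp_ofLp (x := f z), ← WithLp.toLp_ofLp (x := f z'), hf z, hf z', ← WithLp.toLp_sub]
    congr 1
    show -(Aᵀ.mulVec s.ofLp) - -(Aᵀ.mulVec s'.ofLp) = Aᵀ.mulVec (s'.ofLp - s.ofLp)
    rw [Matrix.mulVec_sub]
    abel
  have hnf : ‖f z - f z'‖ ≤ ‖w‖ := by
    rw [hff]
    calc ‖WithLp.toLp 2 (Aᵀ.mulVec (s' - s))‖
        ≤ l2OpNorm Aᵀ * ‖s' - s‖ := l2OpNorm_mulVec Aᵀ (s' - s)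
      _ ≤ 1 * ‖s' - s‖ := by
          gcongr
          rw [l2OpNorm_transpose_s8]; exact hA
      _ = ‖s' - s‖ := one_mul _
      _ = ‖s - s'‖ := norm_sub_rev _ _
      _ ≤ ‖u - u'‖ := hns
      _ ≤ ‖w‖ := hnu
  -- conclude
  have hgg : g z - g z' = (1/2 : ℝ) • (w + (f z - f z')) := by
    rw [hg z, hg z', ← smul_sub]
    congr 1
    rw [hw]
    abel
  rw [hgg, norm_smul]
  have : ‖w + (f z - f z')‖ ≤ ‖w‖ + ‖f z - f z'‖ := norm_add_le _ _
  have : ‖w + (f z - f z')‖ ≤ 2 * ‖w‖ := by linarith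
  calc ‖(1/2 : ℝ)‖ * ‖w + (f z - f z')‖ = (1/2) * ‖w + (f z - f z')‖ := by norm_num
    _ ≤ (1/2) * (2 * ‖w‖) := by linarith
    _ = ‖w‖ := by ring
end

section
/- Let E be the Euclidean space ℝⁿ, let φ : E → ℝ be convex, and let p : E → E be a map such that for every z ∈ E, p(z) is a minimizer of u ↦ (1/2)‖u − z‖² + φ(u), i.e. (1/2)‖p(z) − z‖² + φ(p(z)) ≤ (1/2)‖u − z‖² + φ(u) for all u ∈ E. Then: (a) p is nonexpansive, ‖p(z) − p(z′)‖ ≤ ‖z − z′‖ for all z, z′ ∈ E; and (b) there exists a convex function ψ : E → ℝ which is differentiable everywhere with gradient ∇ψ(z) = p(z) at every z ∈ E. -/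
open scoped RealInnerProductSpace
open Filter Asymptotics

/-- Let `φ : ℝⁿ → ℝ` be convex and let `p` map each `z` to a minimizer of
`u ↦ (1/2)‖u − z‖² + φ u`. Then `p` is nonexpansive, and there exists a convex function `ψ`
differentiable everywhere with `∇ψ(z) = p z` at every `z`. -/
theorem stmt9 {n : ℕ} (φ : EuclideanSpace ℝ (Fin n) → ℝ)
    (hφ : ConvexOn ℝ Set.univ φ)
    (p : EuclideanSpace ℝ (Fin n) → EuclideanSpace ℝ (Fin n))
    (hp : ∀ z u : EuclideanSpace ℝ (Fin n),
      (1/2) * ‖p z - z‖^2 + φ (p z) ≤ (1/2) * ‖u - z‖^2 + φ u) :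
    (∀ z z' : EuclideanSpace ℝ (Fin n), ‖p z - p z'‖ ≤ ‖z - z'‖) ∧
    (∃ ψ : EuclideanSpace ℝ (Fin n) → ℝ,
      ConvexOn ℝ Set.univ ψ ∧ ∀ z, HasGradientAt ψ (p z) z) := by
  -- Variational inequality: φ (p z) ≤ φ u + ⟪p z - z, u - p z⟫ for all u
  have hVI : ∀ z u : EuclideanSpace ℝ (Fin n),
      φ (p z) ≤ φ u + ⟪p z - z, u - p z⟫ := by
    intro z u
    set a := p z with ha
    set c : ℝ := φ u - φ a + ⟪a - z, u - a⟫ with hc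
    set d : ℝ := ‖u - a‖^2 / 2 with hd
    have hkey : ∀ t : ℝ, t ∈ Set.Ioo (0:ℝ) 1 → 0 ≤ c + t * d := by
      intro t ht
      have h1 := hp z ((1-t) • a + t • u)
      have h2 := hφ.2 (Set.mem_univ a) (Set.mem_univ u)
        (by linarith [ht.2] : (0:ℝ) ≤ 1 - t) ht.1.le (by ring)
      have hv : (1-t) • a + t • u - z = (a - z) + t • (u - a) := by module
      have hn : ‖(1-t) • a + t • u - z‖^2
          = ‖a - z‖^2 + 2*(t*⟪a - z, u - a⟫) + t^2*‖u - a‖^2 := by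
        rw [hv, norm_add_sq_real, real_inner_smul_right, norm_smul, mul_pow,
          Real.norm_eq_abs, sq_abs]
      have hmul : 0 ≤ t * (c + t * d) := by
        rw [hn] at h1
        simp only [smul_eq_mul] at h2
        rw [hc, hd]
        nlinarith [h1, h2]
      exact (mul_nonneg_iff_of_pos_left ht.1).mp hmul
    have hten : Tendsto (fun t : ℝ => c + t * d) (nhdsWithin 0 (Set.Ioi 0)) (nhds c) := by
      have h0 : Tendsto (fun t : ℝ => c + t * d) (nhds 0) (nhds (c + 0 * d)) :=
        (continuous_const.add (continuous_id.mul continuous_const)).tendsto 0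
      simpa using h0.mono_left nhdsWithin_le_nhds
    have hc0 : 0 ≤ c := by
      refine ge_of_tendsto hten ?_
      filter_upwards [Ioo_mem_nhdsGT_of_mem
        (by norm_num : (0:ℝ) ∈ Set.Ico (0:ℝ) 1)] with t ht using hkey t ht
    rw [hc] at hc0; linarith
  -- Firm nonexpansiveness
  have hfirm : ∀ z z' : EuclideanSpace ℝ (Fin n),
      ‖p z - p z'‖^2 ≤ ⟪z - z', p z - p z'⟫ := by
    intro z z'
    have h1 := hVI z (p z')
    have h2 := hVI z' (p z)
    have hid : ⟪p z - z, p z' - p z⟫ + ⟪p z' - z', p z - p z'⟫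
        = ⟪z - z', p z - p z'⟫ - ‖p z - p z'‖^2 := by
      rw [← real_inner_self_eq_norm_sq]
      simp only [inner_sub_left, inner_sub_right]
      linarith [real_inner_comm (p z) (p z'), real_inner_comm (p z) z,
        real_inner_comm (p z') z', real_inner_comm z (p z), real_inner_comm z' (p z')]
    linarith
  have hne : ∀ z z' : EuclideanSpace ℝ (Fin n), ‖p z - p z'‖ ≤ ‖z - z'‖ := by
    intro z z'
    rcases eq_or_lt_of_le (norm_nonneg (p z - p z')) with h0 | h0
    · rw [← h0]; exact norm_nonneg _
    · have hcs := real_inner_le_norm (z - z') (p z - p z')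
      have := hfirm z z'
      nlinarith
  refine ⟨hne, fun z => ⟪z, p z⟫ - (1/2) * ‖p z‖^2 - φ (p z), ?_, ?_⟩
  case _ =>
    -- the key "conjugate" inequality
    have hG : ∀ z u : EuclideanSpace ℝ (Fin n),
        ⟪z, u⟫ - (1/2) * ‖u‖^2 - φ u ≤ ⟪z, p z⟫ - (1/2) * ‖p z‖^2 - φ (p z) := by
      intro z u
      have h := hp z u
      rw [norm_sub_sq_real u z, norm_sub_sq_real (p z) z] at h
      have c1 := real_inner_comm u z
      have c2 := real_inner_comm (p z) z
      linarith
    refine ⟨convex_univ, ?_⟩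
    intro x _ y _ s t hs ht hst
    set w := p (s • x + t • y) with hw
    have hx := by
      have h := hp x w
      rw [norm_sub_sq_real w x, norm_sub_sq_real (p x) x] at h
      have c1 := real_inner_comm w x
      have c2 := real_inner_comm (p x) x
      exact (by linarith : ⟪x, w⟫ - (1/2) * ‖w‖^2 - φ w
        ≤ ⟪x, p x⟫ - (1/2) * ‖p x‖^2 - φ (p x))
    have hy := by
      have h := hp y w
      rw [norm_sub_sq_real w y, norm_sub_sq_real (p y) y] at h
      have c1 := real_inner_comm w y
      have c2 := real_inner_comm (p y) y
      exact (by linarith : ⟪y, w⟫ - (1/2) * ‖w‖^2 - φ w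
        ≤ ⟪y, p y⟫ - (1/2) * ‖p y‖^2 - φ (p y))
    have hsplit : ⟪s • x + t • y, w⟫ = s * ⟪x, w⟫ + t * ⟪y, w⟫ := by
      rw [inner_add_left, real_inner_smul_left, real_inner_smul_left]
    simp only [smul_eq_mul]
    rw [← hw, hsplit]
    have hC : s * ((1/2)*‖w‖^2 + φ w) + t * ((1/2)*‖w‖^2 + φ w)
        = (1/2)*‖w‖^2 + φ w := by rw [← add_mul, hst, one_mul]
    linarith [mul_le_mul_of_nonneg_left hx hs, mul_le_mul_of_nonneg_left hy ht, hC]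
  case _ =>
    intro z
    have hG : ∀ z' u : EuclideanSpace ℝ (Fin n),
        ⟪z', u⟫ - (1/2) * ‖u‖^2 - φ u ≤ ⟪z', p z'⟫ - (1/2) * ‖p z'‖^2 - φ (p z') := by
      intro z' u
      have h := hp z' u
      rw [norm_sub_sq_real u z', norm_sub_sq_real (p z') z'] at h
      have c1 := real_inner_comm u z'
      have c2 := real_inner_comm (p z') z'
      linarith
    rw [hasGradientAt_iff_isLittleO, isLittleO_iff]
    intro ε hε
    filter_upwards [Metric.ball_mem_nhds z hε] with y hy
    have hdist : ‖y - z‖ < ε := by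
      rw [← dist_eq_norm]; exact hy
    have hlow : ⟪y - z, p z⟫ ≤
        (⟪y, p y⟫ - (1/2) * ‖p y‖^2 - φ (p y)) - (⟪z, p z⟫ - (1/2) * ‖p z‖^2 - φ (p z)) := by
      have h := hG y (p z)
      have e : ⟪y - z, p z⟫ = ⟪y, p z⟫ - ⟪z, p z⟫ := inner_sub_left y z (p z)
      linarith
    have hup : (⟪y, p y⟫ - (1/2) * ‖p y‖^2 - φ (p y))
        - (⟪z, p z⟫ - (1/2) * ‖p z‖^2 - φ (p z)) ≤ ⟪y - z, p y⟫ := by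
      have h := hG z (p y)
      have e : ⟪y - z, p y⟫ = ⟪y, p y⟫ - ⟪z, p y⟫ := inner_sub_left y z (p y)
      linarith
    have hsplit : ⟪y - z, p y⟫ = ⟪y - z, p z⟫ + ⟪y - z, p y - p z⟫ := by
      rw [inner_sub_right]; ring
    have hcs := real_inner_le_norm (y - z) (p y - p z)
    have hne' := hne y z
    have hcomm : ⟪p z, y - z⟫ = ⟪y - z, p z⟫ := real_inner_comm _ _
    rw [Real.norm_eq_abs, abs_le]
    have h0 : (0:ℝ) ≤ ε * ‖y - z‖ := mul_nonneg hε.le (norm_nonneg _)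
    constructor
    · linarith
    · nlinarith [norm_nonneg (y - z : EuclideanSpace ℝ (Fin n)),
        norm_nonneg (p y - p z)]
end

section
/- Let E be the Euclidean space ℝⁿ, let ψ : E → ℝ be convex and differentiable everywhere, and let f : E → E be its gradient map (∇ψ(z) = f(z) for all z). Assume f is nonexpansive: ‖f(z) − f(z′)‖ ≤ ‖z − z′‖ for all z, z′. Define the convex conjugate ψ* : E → ℝ ∪ {+∞} (extended-real valued) by ψ*(u) = sup_{y ∈ E} (⟨u, y⟩ − ψ(y)). Then: (a) for every z ∈ E, ψ*(f(z)) = ⟨f(z), z⟩ − ψ(z) (in particular it is finite); (b) for every z, u ∈ E, ψ*(f(z)) + ⟨u, z⟩ ≤ ψ*(u) + ⟨f(z), z⟩ (as extended reals), i.e. f(z) minimizes u ↦ (1/2)‖u − z‖² + φ(u) where φ(u) = ψ*(u) − (1/2)‖u‖²; and (c) φ is convex: φ(t·x + (1−t)·y) ≤ t·φ(x) + (1−t)·φ(y) for all x, y ∈ E and t ∈ [0,1], with extended-real arithmetic. -/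
section auxstmt10

variable {n : ℕ}

private lemma aux_deriv10 (ψ : EuclideanSpace ℝ (Fin n) → ℝ)
    (f : EuclideanSpace ℝ (Fin n) → EuclideanSpace ℝ (Fin n))
    (hgrad : ∀ z, HasGradientAt ψ (f z) z)
    (w s : EuclideanSpace ℝ (Fin n)) (t : ℝ) :
    HasDerivAt (fun t : ℝ => ψ (w + t • s)) (inner ℝ (f (w + t • s)) s : ℝ) t := by
  have hline : HasDerivAt (fun t : ℝ => w + t • s) s t := by
    simpa using ((hasDerivAt_id t).smul_const s).const_add w
  have hF := (hasGradientAt_iff_hasFDerivAt.mp (hgrad (w + t • s)))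
  exact hF.comp_hasDerivAt t hline

private lemma aux_gradineq10 (ψ : EuclideanSpace ℝ (Fin n) → ℝ)
    (hψconv : ConvexOn ℝ Set.univ ψ)
    (f : EuclideanSpace ℝ (Fin n) → EuclideanSpace ℝ (Fin n))
    (hgrad : ∀ z, HasGradientAt ψ (f z) z)
    (z y : EuclideanSpace ℝ (Fin n)) :
    ψ z + inner ℝ (f z) (y - z) ≤ ψ y := by
  set g : ℝ → ℝ := fun t => ψ (z + t • (y - z)) with hg
  have hgconv : ConvexOn ℝ Set.univ g := by
    have := hψconv.comp_affineMap (AffineMap.lineMap z y : ℝ →ᵃ[ℝ] EuclideanSpace ℝ (Fin n))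
    have key : g = ψ ∘ (AffineMap.lineMap z y : ℝ →ᵃ[ℝ] EuclideanSpace ℝ (Fin n)) := by
      funext t
      simp only [hg, AffineMap.lineMap_apply, Function.comp, vsub_eq_sub, vadd_eq_add]
      congr 1
      abel
    rw [key]
    simpa using this
  have hd : HasDerivAt g (inner ℝ (f z) (y - z) : ℝ) 0 := by
    simpa using aux_deriv10 ψ f hgrad z (y - z) 0
  have hslope := hgconv.le_slope_of_hasDerivAt (Set.mem_univ 0) (Set.mem_univ 1) zero_lt_one hd
  have hs : slope g 0 1 = ψ y - ψ z := by simp [slope, hg]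
  rw [hs] at hslope
  linarith

private lemma aux_descent10 (ψ : EuclideanSpace ℝ (Fin n) → ℝ)
    (f : EuclideanSpace ℝ (Fin n) → EuclideanSpace ℝ (Fin n))
    (hgrad : ∀ z, HasGradientAt ψ (f z) z)
    (hne : ∀ z z' : EuclideanSpace ℝ (Fin n), ‖f z - f z'‖ ≤ ‖z - z'‖)
    (w s : EuclideanSpace ℝ (Fin n)) :
    ψ (w + s) ≤ ψ w + inner ℝ (f w) s + (1/2) * ‖s‖^2 := by
  set g : ℝ → ℝ := fun t => ψ (w + t • s) - t * (inner ℝ (f w) s : ℝ) - t^2/2 * ‖s‖^2 with hg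
  have hd : ∀ t : ℝ, HasDerivAt g
      ((inner ℝ (f (w + t • s)) s : ℝ) - (inner ℝ (f w) s : ℝ) - t * ‖s‖^2) t := by
    intro t
    have h1 := aux_deriv10 ψ f hgrad w s t
    have h2 : HasDerivAt (fun t : ℝ => t * (inner ℝ (f w) s : ℝ)) (inner ℝ (f w) s : ℝ) t := by
      simpa using (hasDerivAt_id t).mul_const (inner ℝ (f w) s : ℝ)
    have h3 : HasDerivAt (fun t : ℝ => t^2/2 * ‖s‖^2) (t * ‖s‖^2) t := by
      have := (((hasDerivAt_pow 2 t).div_const 2).mul_const (‖s‖^2))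
      simpa using this
    exact (h1.sub h2).sub h3
  have hmono : AntitoneOn g (Set.Icc 0 1) := by
    apply antitoneOn_of_deriv_nonpos (convex_Icc 0 1)
    · exact fun t _ => ((hd t).continuousAt).continuousWithinAt
    · exact fun t _ => ((hd t).differentiableAt).differentiableWithinAt
    · intro t ht
      rw [interior_Icc] at ht
      rw [(hd t).deriv]
      have h4 : (inner ℝ (f (w + t • s)) s : ℝ) - (inner ℝ (f w) s : ℝ) =
          (inner ℝ (f (w + t • s) - f w) s : ℝ) := by rw [inner_sub_left]
      have hb : (inner ℝ (f (w + t • s)) s : ℝ) - (inner ℝ (f w) s : ℝ) ≤ t * ‖s‖^2 := by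
        rw [h4]
        calc (inner ℝ (f (w + t • s) - f w) s : ℝ) ≤ ‖f (w + t • s) - f w‖ * ‖s‖ :=
              real_inner_le_norm _ _
          _ ≤ ‖(w + t • s) - w‖ * ‖s‖ := by gcongr; exact hne _ _
          _ = t * ‖s‖^2 := by
              have h5 : (w + t • s) - w = t • s := by abel
              rw [h5, norm_smul]
              simp [abs_of_pos ht.1]
              ring
      linarith
  have := hmono (Set.left_mem_Icc.mpr zero_le_one) (Set.right_mem_Icc.mpr zero_le_one) zero_le_one
  simp only [hg, one_smul, zero_smul, add_zero, one_mul, zero_mul, one_pow, zero_pow] at this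
  nlinarith [this]

end auxstmt10

/-- Let `ψ : ℝⁿ → ℝ` be convex and differentiable everywhere with gradient map
`f`, and assume `f` is nonexpansive. Define the convex conjugate
`ψ* u = ⨆ y, (⟨u, y⟩ − ψ y)` (extended-real valued). Then
(a) `ψ*(f z) = ⟨f z, z⟩ − ψ z` for every `z`;
(b) `ψ*(f z) + ⟨u, z⟩ ≤ ψ* u + ⟨f z, z⟩` for every `z, u`;
(c) `φ u = ψ* u − (1/2)‖u‖²` is convex (with extended-real arithmetic). -/
theorem stmt10 {n : ℕ} (ψ : EuclideanSpace ℝ (Fin n) → ℝ)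
    (hψconv : ConvexOn ℝ Set.univ ψ)
    (f : EuclideanSpace ℝ (Fin n) → EuclideanSpace ℝ (Fin n))
    (hgrad : ∀ z, HasGradientAt ψ (f z) z)
    (hne : ∀ z z' : EuclideanSpace ℝ (Fin n), ‖f z - f z'‖ ≤ ‖z - z'‖)
    (ψstar : EuclideanSpace ℝ (Fin n) → EReal)
    (hψstar : ∀ u, ψstar u = ⨆ y : EuclideanSpace ℝ (Fin n),
      (((inner ℝ u y : ℝ) - ψ y : ℝ) : EReal))
    (φ : EuclideanSpace ℝ (Fin n) → EReal)
    (hφ : ∀ u, φ u = ψstar u - (((1/2) * ‖u‖^2 : ℝ) : EReal)) :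
    (∀ z, ψstar (f z) = (((inner ℝ (f z) z : ℝ) - ψ z : ℝ) : EReal)) ∧
    (∀ z u, ψstar (f z) + ((inner ℝ u z : ℝ) : EReal) ≤
      ψstar u + ((inner ℝ (f z) z : ℝ) : EReal)) ∧
    (∀ x y : EuclideanSpace ℝ (Fin n), ∀ t : ℝ, 0 ≤ t → t ≤ 1 →
      φ (t • x + (1 - t) • y) ≤ (t : EReal) * φ x + ((1 - t : ℝ) : EReal) * φ y) := by
  have hlow : ∀ u w : EuclideanSpace ℝ (Fin n),
      (((inner ℝ u w : ℝ) - ψ w : ℝ) : EReal) ≤ ψstar u := by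
    intro u w
    rw [hψstar]
    exact le_iSup (fun y => (((inner ℝ u y : ℝ) - ψ y : ℝ) : EReal)) w
  have ha : ∀ z, ψstar (f z) = (((inner ℝ (f z) z : ℝ) - ψ z : ℝ) : EReal) := by
    intro z
    refine le_antisymm ?_ (hlow (f z) z)
    rw [hψstar]
    refine iSup_le fun y => ?_
    rw [EReal.coe_le_coe_iff]
    have h1 := aux_gradineq10 ψ hψconv f hgrad z y
    rw [inner_sub_right] at h1
    linarith
  refine ⟨ha, ?_, ?_⟩
  · intro z u
    rw [ha z]
    calc (((inner ℝ (f z) z : ℝ) - ψ z : ℝ) : EReal) + ((inner ℝ u z : ℝ) : EReal)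
        = (((inner ℝ u z : ℝ) - ψ z : ℝ) : EReal) + ((inner ℝ (f z) z : ℝ) : EReal) := by
          rw [← EReal.coe_add, ← EReal.coe_add]
          norm_cast
          ring
      _ ≤ ψstar u + ((inner ℝ (f z) z : ℝ) : EReal) := add_le_add_left (hlow u z) _
  · have hstrong : ∀ x w : EuclideanSpace ℝ (Fin n),
        (((inner ℝ x w : ℝ) - ψ w + (1/2) * ‖x - f w‖^2 : ℝ) : EReal) ≤ ψstar x := by
      intro x w
      refine le_trans ?_ (hlow x (w + (x - f w)))
      rw [EReal.coe_le_coe_iff]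
      have hdesc := aux_descent10 ψ f hgrad hne w (x - f w)
      have h1 : (inner ℝ x (w + (x - f w)) : ℝ) =
          (inner ℝ x w : ℝ) + (inner ℝ x (x - f w) : ℝ) := inner_add_right _ _ _
      have h2 : (inner ℝ x (x - f w) : ℝ) - (inner ℝ (f w) (x - f w) : ℝ) =
          (inner ℝ (x - f w) (x - f w) : ℝ) := by rw [← inner_sub_left]
      have h3 : (inner ℝ (x - f w) (x - f w) : ℝ) = ‖x - f w‖^2 :=
        real_inner_self_eq_norm_sq _
      linarith
    -- φ is never ⊥, and a coe lower bound for it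
    have hφlow : ∀ u : EuclideanSpace ℝ (Fin n),
        (((inner ℝ u u : ℝ) - ψ u - (1/2) * ‖u‖^2 : ℝ) : EReal) ≤ φ u := by
      intro u
      rw [hφ u]
      have := EReal.sub_le_sub (hlow u u) (le_refl (((1/2) * ‖u‖^2 : ℝ) : EReal))
      refine le_trans (le_of_eq ?_) this
      rw [← EReal.coe_sub]
    have hφnb : ∀ u, φ u ≠ ⊥ := fun u =>
      ne_bot_of_le_ne_bot (EReal.coe_ne_bot _) (hφlow u)
    intro x y t ht0 ht1
    rcases eq_or_lt_of_le ht0 with h0 | h0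
    · rw [← h0]
      norm_num
    rcases eq_or_lt_of_le ht1 with h1 | h1
    · rw [h1]
      norm_num
    have h1t : (0:ℝ) < 1 - t := by linarith
    -- if one coefficient-weighted term is ⊤ the RHS is ⊤
    have hmulnb : ∀ (c : ℝ), 0 < c → ∀ u, ((c : ℝ) : EReal) * φ u ≠ ⊥ := by
      intro c hc u
      have hb := hφlow u
      have : ((c : ℝ) : EReal) * (((inner ℝ u u : ℝ) - ψ u - (1/2) * ‖u‖^2 : ℝ) : EReal) ≤
          ((c : ℝ) : EReal) * φ u :=
        mul_le_mul_of_nonneg_left hb (by exact_mod_cast hc.le)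
      rw [← EReal.coe_mul] at this
      exact ne_bot_of_le_ne_bot (EReal.coe_ne_bot _) this
    rcases eq_or_ne (ψstar x) ⊤ with hxt | hxt
    · have hφx : φ x = ⊤ := by rw [hφ x, hxt, EReal.top_sub_coe]
      rw [hφx, EReal.mul_top_of_pos (by exact_mod_cast h0), EReal.top_add_of_ne_bot
        (hmulnb (1 - t) h1t y)]
      exact le_top
    rcases eq_or_ne (ψstar y) ⊤ with hyt | hyt
    · have hφy : φ y = ⊤ := by rw [hφ y, hyt, EReal.top_sub_coe]
      rw [hφy, EReal.mul_top_of_pos (by exact_mod_cast h1t),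
        EReal.add_top_of_ne_bot (hmulnb t h0 x)]
      exact le_top
    -- main case: both finite
    have hxb : ψstar x ≠ ⊥ := ne_bot_of_le_ne_bot (EReal.coe_ne_bot _) (hlow x x)
    have hyb : ψstar y ≠ ⊥ := ne_bot_of_le_ne_bot (EReal.coe_ne_bot _) (hlow y y)
    obtain ⟨a, hxa⟩ : ∃ a : ℝ, ψstar x = (a : EReal) :=
      ⟨(ψstar x).toReal, (EReal.coe_toReal hxt hxb).symm⟩
    obtain ⟨b, hyb'⟩ : ∃ b : ℝ, ψstar y = (b : EReal) :=
      ⟨(ψstar y).toReal, (EReal.coe_toReal hyt hyb).symm⟩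
    set w₀ := t • x + (1 - t) • y with hw₀
    set r : ℝ := t * (a - (1/2) * ‖x‖^2) + (1 - t) * (b - (1/2) * ‖y‖^2) with hr
    have hsup : ψstar w₀ ≤ ((r + (1/2) * ‖w₀‖^2 : ℝ) : EReal) := by
      rw [hψstar]
      refine iSup_le fun w => ?_
      rw [EReal.coe_le_coe_iff]
      have haw : (inner ℝ x w : ℝ) - ψ w + (1/2) * ‖x - f w‖^2 ≤ a := by
        have := (hstrong x w).trans_eq hxa
        exact EReal.coe_le_coe_iff.mp this
      have hbw : (inner ℝ y w : ℝ) - ψ w + (1/2) * ‖y - f w‖^2 ≤ b := by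
        have := (hstrong y w).trans_eq hyb'
        exact EReal.coe_le_coe_iff.mp this
      have e1 : ‖x - f w‖^2 = ‖x‖^2 - 2 * (inner ℝ x (f w) : ℝ) + ‖f w‖^2 :=
        norm_sub_sq_real x (f w)
      have e2 : ‖y - f w‖^2 = ‖y‖^2 - 2 * (inner ℝ y (f w) : ℝ) + ‖f w‖^2 :=
        norm_sub_sq_real y (f w)
      have e3 : ‖w₀ - f w‖^2 = ‖w₀‖^2 - 2 * (inner ℝ w₀ (f w) : ℝ) + ‖f w‖^2 :=
        norm_sub_sq_real w₀ (f w)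
      have e4 : (inner ℝ w₀ (f w) : ℝ) = t * (inner ℝ x (f w) : ℝ) +
          (1 - t) * (inner ℝ y (f w) : ℝ) := by
        rw [hw₀, inner_add_left, real_inner_smul_left, real_inner_smul_left]
      have e5 : (inner ℝ w₀ w : ℝ) = t * (inner ℝ x w : ℝ) + (1 - t) * (inner ℝ y w : ℝ) := by
        rw [hw₀, inner_add_left, real_inner_smul_left, real_inner_smul_left]
      have e6 : (0:ℝ) ≤ ‖w₀ - f w‖^2 := by positivity
      nlinarith [mul_le_mul_of_nonneg_left haw ht0, mul_le_mul_of_nonneg_left hbw h1t.le]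
    have hφx : φ x = ((a - (1/2) * ‖x‖^2 : ℝ) : EReal) := by
      rw [hφ x, hxa, ← EReal.coe_sub]
    have hφy : φ y = ((b - (1/2) * ‖y‖^2 : ℝ) : EReal) := by
      rw [hφ y, hyb', ← EReal.coe_sub]
    calc φ w₀ = ψstar w₀ - (((1/2) * ‖w₀‖^2 : ℝ) : EReal) := hφ w₀
      _ ≤ ((r + (1/2) * ‖w₀‖^2 : ℝ) : EReal) - (((1/2) * ‖w₀‖^2 : ℝ) : EReal) :=
          EReal.sub_le_sub hsup le_rfl
      _ = (r : EReal) := by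
          rw [← EReal.coe_sub]
          norm_cast
          ring
      _ = (t : EReal) * φ x + ((1 - t : ℝ) : EReal) * φ y := by
          rw [hφx, hφy, ← EReal.coe_mul, ← EReal.coe_mul, ← EReal.coe_add]
end

section
/- Let E be the Euclidean space ℝⁿ, let φ : E → ℝ be convex, and let λ > 0, μ > 0. Define the Moreau envelope M : E → ℝ by M(u) = inf_{w ∈ E} ( (1/(2μ))‖w − u‖² + φ(w) ). Fix z ∈ E, and suppose p ∈ E is a minimizer of u ↦ (1/(2(μ+λ)))‖u − z‖² + φ(u). Then the point q = z + (λ/(μ+λ))·(p − z) is a minimizer of u ↦ (1/(2λ))‖u − z‖² + M(u); that is, Prox^λ_{M^μ_φ}(z) = z + (λ/(μ+λ))·(Prox^{μ+λ}_φ(z) − z). -/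
lemma key_quad (lam μ : ℝ) (hlam : 0 < lam) (hμ : 0 < μ)
    {n : ℕ} (a b : EuclideanSpace ℝ (Fin n)) :
    (1/(2*(μ+lam))) * ‖a + b‖^2 ≤ (1/(2*lam)) * ‖a‖^2 + (1/(2*μ)) * ‖b‖^2 := by
  have h1 : ‖a + b‖ ≤ ‖a‖ + ‖b‖ := norm_add_le a b
  have h2 : ‖a + b‖^2 ≤ (‖a‖ + ‖b‖)^2 :=
    pow_le_pow_left₀ (norm_nonneg _) h1 2
  have h3 : 0 ≤ (μ * ‖a‖ - lam * ‖b‖)^2 := sq_nonneg _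
  have hml : 0 < μ + lam := by linarith
  have h5 : lam*μ*‖a + b‖^2 ≤ (μ*‖a‖^2 + lam*‖b‖^2)*(μ+lam) := by
    nlinarith [mul_pos hlam hμ]
  have h6 : (1/(2*lam))*‖a‖^2 + (1/(2*μ))*‖b‖^2 - (1/(2*(μ+lam)))*‖a + b‖^2
      = ((μ*‖a‖^2 + lam*‖b‖^2)*(μ+lam) - lam*μ*‖a + b‖^2) / (2*lam*μ*(μ+lam)) := by
    field_simp
  have h7 : 0 ≤ ((μ*‖a‖^2 + lam*‖b‖^2)*(μ+lam) - lam*μ*‖a + b‖^2) / (2*lam*μ*(μ+lam)) :=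
    div_nonneg (by linarith) (by positivity)
  linarith

/-- Let `φ : ℝⁿ → ℝ` be convex, `λ, μ > 0`, and
`M u = ⨅ w, ((1/(2μ))‖w − u‖² + φ w)` the Moreau envelope. Fix `z` and suppose `p` minimizes
`u ↦ (1/(2(μ+λ)))‖u − z‖² + φ u`. Then `q = z + (λ/(μ+λ)) • (p − z)` minimizes
`u ↦ (1/(2λ))‖u − z‖² + M u`. -/
theorem stmt12 {n : ℕ} (φ : EuclideanSpace ℝ (Fin n) → ℝ)
    (hφ : ConvexOn ℝ Set.univ φ) (lam μ : ℝ) (hlam : 0 < lam) (hμ : 0 < μ)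
    (M : EuclideanSpace ℝ (Fin n) → ℝ)
    (hM : ∀ u, M u = ⨅ w : EuclideanSpace ℝ (Fin n), ((1/(2*μ)) * ‖w - u‖^2 + φ w))
    (z p : EuclideanSpace ℝ (Fin n))
    (hp : ∀ u, (1/(2*(μ+lam))) * ‖p - z‖^2 + φ p ≤ (1/(2*(μ+lam))) * ‖u - z‖^2 + φ u)
    (q : EuclideanSpace ℝ (Fin n)) (hq : q = z + (lam/(μ+lam)) • (p - z)) :
    ∀ u, (1/(2*lam)) * ‖q - z‖^2 + M q ≤ (1/(2*lam)) * ‖u - z‖^2 + M u := by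
  have hml : 0 < μ + lam := by linarith
  set c : ℝ := (1/(2*(μ+lam))) * ‖p - z‖^2 + φ p with hc
  -- key inequality for all u w
  have key : ∀ u w : EuclideanSpace ℝ (Fin n),
      (1/(2*(μ+lam))) * ‖w - z‖^2 ≤ (1/(2*lam)) * ‖u - z‖^2 + (1/(2*μ)) * ‖w - u‖^2 := by
    intro u w
    have h := key_quad lam μ hlam hμ (u - z) (w - u)
    have : u - z + (w - u) = w - z := by abel
    rwa [this] at h
  -- lower bound for the envelope
  have lb : ∀ u w : EuclideanSpace ℝ (Fin n),
      c - (1/(2*lam)) * ‖u - z‖^2 ≤ (1/(2*μ)) * ‖w - u‖^2 + φ w := by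
    intro u w
    have h1 := hp w
    have h2 := key u w
    linarith
  have hC : ∀ u, c - (1/(2*lam)) * ‖u - z‖^2 ≤ M u := by
    intro u
    rw [hM u]
    exact le_ciInf (lb u)
  -- upper bound at q
  have hbdd : BddBelow (Set.range fun w : EuclideanSpace ℝ (Fin n) =>
      (1/(2*μ)) * ‖w - q‖^2 + φ w) := by
    refine ⟨c - (1/(2*lam)) * ‖q - z‖^2, ?_⟩
    rintro x ⟨w, rfl⟩
    exact lb q w
  have hMq : M q ≤ (1/(2*μ)) * ‖p - q‖^2 + φ p := by
    rw [hM q]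
    exact ciInf_le hbdd p
  -- norm computations
  have hqz : q - z = (lam/(μ+lam)) • (p - z) := by
    rw [hq]; exact add_sub_cancel_left z _
  have hpq : p - q = (μ/(μ+lam)) • (p - z) := by
    rw [hq]
    have : (μ/(μ+lam)) = 1 - lam/(μ+lam) := by field_simp; ring
    rw [this, sub_smul, one_smul]
    abel
  have hn1 : ‖q - z‖^2 = (lam/(μ+lam))^2 * ‖p - z‖^2 := by
    rw [hqz, norm_smul, mul_pow, Real.norm_eq_abs, sq_abs]
  have hn2 : ‖p - q‖^2 = (μ/(μ+lam))^2 * ‖p - z‖^2 := by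
    rw [hpq, norm_smul, mul_pow, Real.norm_eq_abs, sq_abs]
  have heq : (1/(2*lam)) * ‖q - z‖^2 + (1/(2*μ)) * ‖p - q‖^2
      = (1/(2*(μ+lam))) * ‖p - z‖^2 := by
    rw [hn1, hn2]
    field_simp
    ring
  intro u
  have h1 : (1/(2*lam)) * ‖q - z‖^2 + M q ≤ c := by
    have := hMq
    linarith [heq]
  have h2 : c ≤ (1/(2*lam)) * ‖u - z‖^2 + M u := by
    have := hC u
    linarith
  linarith
end

section
/- Let G be a real m×n matrix, K a real h×h matrix, σ : ℝ → ℝ a function applied entrywise to matrices, B a real n×h matrix, and d : {1,…,n} → ℝ with d(i) > 0 for all i. Let D̃ = diag(d), let Ĝ = G·diag(d(i)^{−1/2})/√2, and let S = diag(√(2·d(i))), so S = (2D̃)^{1/2}. Then a real n×h matrix Z satisfies the row-normalized equation Z = −(2D̃)⁻¹ Gᵀ σ(G (Z + B) Kᵀ) K if and only if Z̄ := S·Z satisfies the symmetric-normalized equation Z̄ = −Ĝᵀ σ(Ĝ (Z̄ + B̄) Kᵀ) K, where B̄ = S·B. -/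
open Matrix

/-- With `d i > 0`, `D̃ = diag d`, `Ĝ = G · diag (d i)^{−1/2} / √2`, and
`S = (2 D̃)^{1/2} = diag √(2 d i)`, a matrix `Z` satisfies the row-normalized equation
`Z = −(2D̃)⁻¹ Gᵀ σ(G (Z + B) Kᵀ) K` iff `Z̄ = S Z` satisfies the symmetric-normalized equation
`Z̄ = −Ĝᵀ σ(Ĝ (Z̄ + B̄) Kᵀ) K` with `B̄ = S B`. -/
theorem stmt14 {m n h : ℕ} (G : Matrix (Fin m) (Fin n) ℝ) (K : Matrix (Fin h) (Fin h) ℝ)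
    (σ : ℝ → ℝ) (B Z : Matrix (Fin n) (Fin h) ℝ)
    (d : Fin n → ℝ) (hd : ∀ i, 0 < d i)
    (Ghat : Matrix (Fin m) (Fin n) ℝ)
    (hGhat : Ghat = (Real.sqrt 2)⁻¹ • (G * Matrix.diagonal fun i => (Real.sqrt (d i))⁻¹))
    (S : Matrix (Fin n) (Fin n) ℝ)
    (hS : S = Matrix.diagonal fun i => Real.sqrt (2 * d i)) :
    (Z = -((Matrix.diagonal fun i => (2 * d i)⁻¹) * Gᵀ * ((G * (Z + B) * Kᵀ).map σ) * K))
    ↔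
    (S * Z = -(Ghatᵀ * ((Ghat * (S * Z + S * B) * Kᵀ).map σ) * K)) := by
  have h2 : Real.sqrt 2 ≠ 0 := by positivity
  have hdne : ∀ i, Real.sqrt (d i) ≠ 0 := fun i => (Real.sqrt_pos.mpr (hd i)).ne'
  have hGS : Ghat * S = G := by
    subst hGhat hS
    rw [Matrix.smul_mul, Matrix.mul_assoc, Matrix.diagonal_mul_diagonal]
    have heq : (fun i => (Real.sqrt (d i))⁻¹ * Real.sqrt (2 * d i))
        = fun _ => Real.sqrt 2 := by
      funext i
      rw [Real.sqrt_mul (by norm_num : (0:ℝ) ≤ 2), mul_comm (Real.sqrt 2),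
        ← mul_assoc, inv_mul_cancel₀ (hdne i), one_mul]
    rw [heq]
    have hdiag : (Matrix.diagonal fun _ : Fin n => Real.sqrt 2)
        = (Real.sqrt 2) • (1 : Matrix (Fin n) (Fin n) ℝ) := by
      ext i j
      by_cases hij : i = j <;> simp [Matrix.diagonal, hij]
    rw [hdiag, Matrix.mul_smul, smul_smul, inv_mul_cancel₀ h2, one_smul, Matrix.mul_one]
  have hGT : S * (Matrix.diagonal fun i => (2 * d i)⁻¹) * Gᵀ = Ghatᵀ := by
    subst hGhat hS
    rw [Matrix.transpose_smul, Matrix.transpose_mul, Matrix.diagonal_transpose,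
      Matrix.diagonal_mul_diagonal, ← Matrix.smul_mul]
    congr 1
    ext i j
    by_cases hij : i = j
    · subst hij
      simp only [Matrix.smul_apply, Matrix.diagonal_apply_eq, smul_eq_mul]
      have ha : Real.sqrt 2 * Real.sqrt (d i) ≠ 0 := mul_ne_zero h2 (hdne i)
      have h2d : (2 * d i) = (Real.sqrt 2 * Real.sqrt (d i)) * (Real.sqrt 2 * Real.sqrt (d i)) := by
        rw [mul_mul_mul_comm, Real.mul_self_sqrt (by norm_num : (0:ℝ) ≤ 2),
          Real.mul_self_sqrt (hd i).le]
      rw [Real.sqrt_mul (by norm_num : (0:ℝ) ≤ 2), h2d]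
      field_simp
    · simp [Matrix.diagonal_apply_ne _ hij]
  have hT : (Matrix.diagonal fun i => (Real.sqrt (2 * d i))⁻¹) * S = 1 := by
    subst hS
    rw [Matrix.diagonal_mul_diagonal]
    have heq : (fun i => (Real.sqrt (2 * d i))⁻¹ * Real.sqrt (2 * d i))
        = fun _ : Fin n => (1:ℝ) := funext fun i =>
      inv_mul_cancel₀ (Real.sqrt_pos.mpr (mul_pos two_pos (hd i))).ne'
    rw [heq, Matrix.diagonal_one]
  set T := Matrix.diagonal fun i => (Real.sqrt (2 * d i))⁻¹ with hTdef
  have hM : G * (Z + B) = Ghat * (S * Z + S * B) := by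
    rw [← hGS, Matrix.mul_assoc, Matrix.mul_add]
  set RowR := -((Matrix.diagonal fun i => (2 * d i)⁻¹) * Gᵀ * ((G * (Z + B) * Kᵀ).map σ) * K)
    with hRow
  have hmain : S * RowR = -(Ghatᵀ * ((Ghat * (S * Z + S * B) * Kᵀ).map σ) * K) := by
    rw [hRow, ← hM, Matrix.mul_neg, ← Matrix.mul_assoc, ← Matrix.mul_assoc,
      ← Matrix.mul_assoc, hGT]
  constructor
  · intro hZ
    rw [← hmain]
    exact congrArg (S * ·) hZ
  · intro hb
    have h1 : S * Z = S * RowR := by rw [hmain]; exact hb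
    calc Z = (T * S) * Z := by rw [hT, Matrix.one_mul]
      _ = T * (S * Z) := by rw [Matrix.mul_assoc]
      _ = T * (S * RowR) := by rw [h1]
      _ = (T * S) * RowR := by rw [Matrix.mul_assoc]
      _ = RowR := by rw [hT, Matrix.one_mul]
end
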